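/- arXiv:1510.04777 — 4 statements merged into one kernel-verified Lean document; each statement's English description precedes it below -/
import Mathlib

section
/- Let C be a finite poset with a maximal element m, and let C' = C \ {m}. Then the commutative square of full subposet inclusions with vertices ∂(C_{/m}) (the elements strictly below m), C_{/m} (the elements ≤ m), C', and C is a pushout square in the category of small categories. -/
open CategoryTheory CategoryTheory.Limits

/-- The inclusion `{x | x < m} → {x | x ≤ m}` as a functor. -/
def ltToLe {C : Type} [PartialOrder C] (m : C) : {x : C // x < m} ⥤ {x : C // x ≤ m} :=
  Monotone.functor (f := fun x : {x : C // x < m} => (⟨x.1, x.2.le⟩ : {x : C // x ≤ m}))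
    (fun _ _ h => h)

/-- The inclusion `{x | x < m} → {x | x ≠ m}` as a functor. -/
def ltToNe {C : Type} [PartialOrder C] (m : C) : {x : C // x < m} ⥤ {x : C // x ≠ m} :=
  Monotone.functor (f := fun x : {x : C // x < m} => (⟨x.1, x.2.ne⟩ : {x : C // x ≠ m}))
    (fun _ _ h => h)

/-- The inclusion `{x | x ≤ m} → C` as a functor. -/
def leToAll {C : Type} [PartialOrder C] (m : C) : {x : C // x ≤ m} ⥤ C :=
  (Subtype.mono_coe _).functor

/-- The inclusion `{x | x ≠ m} → C` as a functor. -/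
def neToAll {C : Type} [PartialOrder C] (m : C) : {x : C // x ≠ m} ⥤ C :=
  (Subtype.mono_coe _).functor

section Desc

variable {C : Type} [PartialOrder C] {m : C}
  {D : Type*} [Category D] (F : {x : C // x ≤ m} ⥤ D) (G : {x : C // x ≠ m} ⥤ D)

noncomputable def descObj (x : C) : D :=
  letI := Classical.dec (x = m)
  if hx : x = m then F.obj ⟨x, hx.le⟩ else G.obj ⟨x, hx⟩

lemma descObj_le (hFG : ltToLe m ⋙ F = ltToNe m ⋙ G) (x : C) (hx : x ≤ m) : descObj F G x = F.obj ⟨x, hx⟩ := by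
  unfold descObj
  split
  · rfl
  · next hx' => exact (CategoryTheory.Functor.congr_obj hFG ⟨x, lt_of_le_of_ne hx hx'⟩).symm

lemma descObj_ne (x : C) (hx : x ≠ m) : descObj F G x = G.obj ⟨x, hx⟩ := by
  unfold descObj
  split
  · next h => exact absurd h hx
  · rfl

noncomputable def descMap (hFG : ltToLe m ⋙ F = ltToNe m ⋙ G)
    (hm : ∀ c : C, m ≤ c → c = m) {x y : C} (f : x ⟶ y) : descObj F G x ⟶ descObj F G y :=
  letI := Classical.dec (y = m)
  if hy : y = m then
    eqToHom (descObj_le F G hFG x ((leOfHom f).trans hy.le)) ≫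
      F.map (homOfLE (leOfHom f)) ≫ eqToHom (descObj_le F G hFG y hy.le).symm
  else
    eqToHom (descObj_ne F G x (fun hx => hy (hm y (hx ▸ leOfHom f)))) ≫
      G.map (homOfLE (leOfHom f)) ≫ eqToHom (descObj_ne F G y hy).symm

lemma FG_map (hFG : ltToLe m ⋙ F = ltToNe m ⋙ G) {x y : C} (hx : x < m) (hy : y < m) (h : x ≤ y) :
    G.map (homOfLE h : (⟨x, hx.ne⟩ : {x : C // x ≠ m}) ⟶ ⟨y, hy.ne⟩) =
      eqToHom (show G.obj ⟨x, hx.ne⟩ = F.obj ⟨x, hx.le⟩ from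
          (CategoryTheory.Functor.congr_obj hFG ⟨x, hx⟩).symm) ≫
        F.map (homOfLE h : (⟨x, hx.le⟩ : {x : C // x ≤ m}) ⟶ ⟨y, hy.le⟩) ≫
        eqToHom (show F.obj ⟨y, hy.le⟩ = G.obj ⟨y, hy.ne⟩ from
          CategoryTheory.Functor.congr_obj hFG ⟨y, hy⟩) := by
  have key := CategoryTheory.Functor.congr_hom hFG
    (homOfLE (show (⟨x, hx⟩ : {x : C // x < m}) ≤ ⟨y, hy⟩ from h))
  simp only [Functor.comp_map] at key
  have e1 : (homOfLE h : (⟨x, hx.le⟩ : {x : C // x ≤ m}) ⟶ ⟨y, hy.le⟩) =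
      (ltToLe m).map (homOfLE (show (⟨x, hx⟩ : {x : C // x < m}) ≤ ⟨y, hy⟩ from h)) :=
    Subsingleton.elim _ _
  have e2 : (homOfLE h : (⟨x, hx.ne⟩ : {x : C // x ≠ m}) ⟶ ⟨y, hy.ne⟩) =
      (ltToNe m).map (homOfLE (show (⟨x, hx⟩ : {x : C // x < m}) ≤ ⟨y, hy⟩ from h)) :=
    Subsingleton.elim _ _
  rw [e1, e2]
  exact CategoryTheory.Functor.congr_hom hFG.symm _

lemma descMap_id (hFG : ltToLe m ⋙ F = ltToNe m ⋙ G)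
    (hm : ∀ c : C, m ≤ c → c = m) (x : C) :
    descMap F G hFG hm (𝟙 x) = 𝟙 (descObj F G x) := by
  unfold descMap
  split
  · rw [show (homOfLE (leOfHom (𝟙 x)) : (⟨x, _⟩ : {x : C // x ≤ m}) ⟶ ⟨x, _⟩) = 𝟙 _ from
      Subsingleton.elim _ _]
    simp
  · rw [show (homOfLE (leOfHom (𝟙 x)) : (⟨x, _⟩ : {x : C // x ≠ m}) ⟶ ⟨x, _⟩) = 𝟙 _ from
      Subsingleton.elim _ _]
    simp

lemma descMap_comp (hFG : ltToLe m ⋙ F = ltToNe m ⋙ G)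
    (hm : ∀ c : C, m ≤ c → c = m) {x y z : C} (f : x ⟶ y) (g : y ⟶ z) :
    descMap F G hFG hm (f ≫ g) = descMap F G hFG hm f ≫ descMap F G hFG hm g := by
  unfold descMap
  by_cases hz : z = m
  · rw [dif_pos hz, dif_pos hz]
    by_cases hy : y = m
    · rw [dif_pos hy]
      simp only [Category.assoc, eqToHom_trans_assoc, eqToHom_refl, Category.id_comp]
      rw [← Functor.map_comp_assoc]
      congr 1
    · rw [dif_neg hy]
      have hxm : x < m := lt_of_le_of_ne ((leOfHom f).trans ((leOfHom g).trans hz.le))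
        (fun hx => hy (hm y (hx ▸ leOfHom f)))
      have hym : y < m := lt_of_le_of_ne ((leOfHom g).trans hz.le) hy
      rw [show (homOfLE (leOfHom f) : (⟨x, _⟩ : {x : C // x ≠ m}) ⟶ ⟨y, _⟩) =
        (homOfLE (leOfHom f) : (⟨x, hxm.ne⟩ : {x : C // x ≠ m}) ⟶ ⟨y, hym.ne⟩) from
        Subsingleton.elim _ _]
      rw [FG_map F G hFG hxm hym (leOfHom f)]
      simp only [Category.assoc, eqToHom_trans_assoc, eqToHom_refl, Category.id_comp]
      erw [← Functor.map_comp_assoc]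
      congr 1
  · rw [dif_neg hz, dif_neg hz]
    have hy : y ≠ m := fun hy => hz (hm z (hy ▸ leOfHom g))
    rw [dif_neg hy]
    simp only [Category.assoc, eqToHom_trans_assoc, eqToHom_refl, Category.id_comp]
    rw [← Functor.map_comp_assoc]
    congr 1

noncomputable def descFunctor (hFG : ltToLe m ⋙ F = ltToNe m ⋙ G)
    (hm : ∀ c : C, m ≤ c → c = m) : C ⥤ D where
  obj := descObj F G
  map := descMap F G hFG hm
  map_id := descMap_id F G hFG hm
  map_comp := descMap_comp F G hFG hm

lemma leToAll_descFunctor (hFG : ltToLe m ⋙ F = ltToNe m ⋙ G)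
    (hm : ∀ c : C, m ≤ c → c = m) : leToAll m ⋙ descFunctor F G hFG hm = F := by
  refine CategoryTheory.Functor.ext (fun x => descObj_le F G hFG x.1 x.2) (fun x y f => ?_)
  show descMap F G hFG hm ((leToAll m).map f) = _
  unfold descMap
  split
  · next hy =>
    congr 1
  · next hy =>
    have hxm : x.1 < m := lt_of_le_of_ne x.2
      (fun hx => hy (hm y.1 (hx.symm.trans_le (leOfHom f))))
    have hym : y.1 < m := lt_of_le_of_ne y.2 hy
    rw [FG_map F G hFG (x := (leToAll m).obj x) (y := (leToAll m).obj y) hxm hym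
      (leOfHom ((leToAll m).map f))]
    simp only [Category.assoc, eqToHom_trans, eqToHom_trans_assoc]
    congr 1

lemma neToAll_descFunctor (hFG : ltToLe m ⋙ F = ltToNe m ⋙ G)
    (hm : ∀ c : C, m ≤ c → c = m) : neToAll m ⋙ descFunctor F G hFG hm = G := by
  refine CategoryTheory.Functor.ext (fun x => descObj_ne F G x.1 x.2) (fun x y f => ?_)
  show descMap F G hFG hm ((neToAll m).map f) = _
  unfold descMap
  split
  · next h => exact absurd h y.2
  congr 1

lemma descFunctor_uniq (hFG : ltToLe m ⋙ F = ltToNe m ⋙ G)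
    (hm : ∀ c : C, m ≤ c → c = m) (K : C ⥤ D) (h1 : leToAll m ⋙ K = F) (h2 : neToAll m ⋙ K = G) :
    K = descFunctor F G hFG hm := by
  have hobj : ∀ x : C, K.obj x = descObj F G x := by
    intro x
    by_cases hx : x = m
    · rw [descObj_le F G hFG x hx.le, ← CategoryTheory.Functor.congr_obj h1 ⟨x, hx.le⟩]; rfl
    · rw [descObj_ne F G x hx, ← CategoryTheory.Functor.congr_obj h2 ⟨x, hx⟩]; rfl
  refine CategoryTheory.Functor.ext hobj (fun x y f => ?_)
  show K.map f = eqToHom _ ≫ descMap F G hFG hm f ≫ eqToHom _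
  unfold descMap
  split
  · next hy =>
    have key := CategoryTheory.Functor.congr_hom h1 (X := ⟨x, (leOfHom f).trans hy.le⟩) (Y := ⟨y, hy.le⟩)
      (homOfLE (leOfHom f))
    simp only [Functor.comp_map] at key
    have hK : K.map ((leToAll m).map (homOfLE (leOfHom f) :
        (⟨x, (leOfHom f).trans hy.le⟩ : {x : C // x ≤ m}) ⟶ ⟨y, hy.le⟩)) = K.map f := by
      congr 1
    rw [← hK, key]
    simp only [Category.assoc, eqToHom_trans, eqToHom_trans_assoc]
    erw [eqToHom_trans]
    rfl
  · next hy =>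
    have hx : x ≠ m := fun hx => hy (hm y (hx ▸ leOfHom f))
    have key := CategoryTheory.Functor.congr_hom h2 (X := ⟨x, hx⟩) (Y := ⟨y, hy⟩) (homOfLE (leOfHom f))
    simp only [Functor.comp_map] at key
    have hK : K.map ((neToAll m).map (homOfLE (leOfHom f) :
        (⟨x, hx⟩ : {x : C // x ≠ m}) ⟶ ⟨y, hy⟩)) = K.map f := by
      congr 1
    rw [← hK, key]
    simp only [Category.assoc, eqToHom_trans, eqToHom_trans_assoc]
    erw [eqToHom_trans]
    rfl



end Desc


/-- For a finite poset `C` with a maximal element `m`, the square of full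
subposet inclusions with vertices `∂(C_{/m}) = {x | x < m}`, `C_{/m} = {x | x ≤ m}`,
`C' = C \ {m}`, and `C` is a pushout square in the category of small categories. -/
theorem poset_maximal_pushout_in_Cat
    (C : Type) [PartialOrder C] [Fintype C] (m : C) (hm : ∀ c : C, m ≤ c → c = m) :
    IsPushout (Z := Cat.of {x : C // x < m}) (X := Cat.of {x : C // x ≤ m})
      (Y := Cat.of {x : C // x ≠ m}) (P := Cat.of C)
      (ltToLe m).toCatHom (ltToNe m).toCatHom (leToAll m).toCatHom (neToAll m).toCatHom := by
  refine { w := rfl, isColimit' := ⟨PushoutCocone.IsColimit.mk _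
    (fun s => (descFunctor (C := C) (m := m) s.inl.toFunctor s.inr.toFunctor
      (congrArg Cat.Hom.toFunctor s.condition) hm).toCatHom)
    (fun s => Cat.ext (leToAll_descFunctor (C := C) (m := m) s.inl.toFunctor s.inr.toFunctor
      (congrArg Cat.Hom.toFunctor s.condition) hm))
    (fun s => Cat.ext (neToAll_descFunctor (C := C) (m := m) s.inl.toFunctor s.inr.toFunctor
      (congrArg Cat.Hom.toFunctor s.condition) hm))
    (fun s K h1 h2 => Cat.ext (descFunctor_uniq (C := C) (m := m) s.inl.toFunctor s.inr.toFunctor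
      (congrArg Cat.Hom.toFunctor s.condition) hm K.toFunctor
      (congrArg Cat.Hom.toFunctor h1) (congrArg Cat.Hom.toFunctor h2)))⟩ }
end

section
/- Let M be a model category, let x be a cofibrant object, and let Cyl^•(x) be a cylinder object for x (a cosimplicial object with Cyl^0(x) ≅ x, codegeneracies weak equivalences, and latching maps cofibrations for n ≥ 1). Then for any acyclic fibration y → z in M, the induced map of simplicial sets Hom_M(Cyl^•(x), y) → Hom_M(Cyl^•(x), z) is an acyclic fibration in the Kan–Quillen model structure. -/
open CategoryTheory CategoryTheory.Limits Simplicial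

universe v u

/-- A class of morphisms is closed under retracts. -/
def RetractClosed {M : Type u} [Category.{v} M] (P : MorphismProperty M) : Prop :=
  ∀ ⦃a b c d : M⦄ (f : a ⟶ b) (g : c ⟶ d) (ia : a ⟶ c) (ra : c ⟶ a) (ib : b ⟶ d) (rb : d ⟶ b),
    ia ≫ ra = 𝟙 a → ib ≫ rb = 𝟙 b → ia ≫ g = f ≫ ib → ra ≫ f = g ≫ rb → P g → P f

/-- A (Quillen) model structure on a finitely bicomplete category `M`. -/
class ModelCategory (M : Type u) [Category.{v} M] [HasFiniteLimits M] [HasFiniteColimits M] :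
    Type (max u v) where
  W : MorphismProperty M
  Cof : MorphismProperty M
  Fib : MorphismProperty M
  w_id : ∀ x : M, W (𝟙 x)
  w_comp : ∀ {x y z : M} (f : x ⟶ y) (g : y ⟶ z), W f → W g → W (f ≫ g)
  w_cancel_left : ∀ {x y z : M} (f : x ⟶ y) (g : y ⟶ z), W f → W (f ≫ g) → W g
  w_cancel_right : ∀ {x y z : M} (f : x ⟶ y) (g : y ⟶ z), W g → W (f ≫ g) → W f
  w_retract : RetractClosed W
  cof_retract : RetractClosed Cof
  fib_retract : RetractClosed Fib
  lift_cof_triv : ∀ {a b x y : M} (i : a ⟶ b) (p : x ⟶ y),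
    Cof i → W i → Fib p → HasLiftingProperty i p
  lift_triv_fib : ∀ {a b x y : M} (i : a ⟶ b) (p : x ⟶ y),
    Cof i → Fib p → W p → HasLiftingProperty i p
  factor_cw_f : ∀ {x y : M} (f : x ⟶ y), ∃ (z : M) (i : x ⟶ z) (p : z ⟶ y),
    Cof i ∧ W i ∧ Fib p ∧ i ≫ p = f
  factor_c_wf : ∀ {x y : M} (f : x ⟶ y), ∃ (z : M) (i : x ⟶ z) (p : z ⟶ y),
    Cof i ∧ Fib p ∧ W p ∧ i ≫ p = f

namespace ModelCategory

variable {M : Type u} [Category.{v} M] [HasFiniteLimits M] [HasFiniteColimits M] [ModelCategory M]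

/-- An object is cofibrant if the map from the initial object is a cofibration. -/
def Cofibrant (x : M) : Prop := Cof (M := M) (initial.to x)

/-- An object is fibrant if the map to the terminal object is a fibration. -/
def Fibrant (x : M) : Prop := Fib (M := M) (terminal.from x)

end ModelCategory
variable {M : Type u} [Category.{v} M]

/-- The latching category of `Δ` at `[n]`: proper monomorphisms `[m] ↪ [n]`. -/
abbrev CosimplicialLatchingCat (n : ℕ) : Type :=
  ObjectProperty.FullSubcategory (fun f : Over (SimplexCategory.mk n) => Mono f.hom ∧ f.left.len < n)

/-- The latching diagram of a cosimplicial object at `[n]`. -/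
def cosimplicialLatchingDiagram (X : CosimplicialObject M) (n : ℕ) :
    CosimplicialLatchingCat n ⥤ M :=
  ObjectProperty.ι _ ⋙ Over.forget _ ⋙ X

/-- The canonical cocone on the latching diagram with apex `X.obj [n]`. -/
def cosimplicialLatchingCocone (X : CosimplicialObject M) (n : ℕ) :
    Cocone (cosimplicialLatchingDiagram X n) where
  pt := X.obj (SimplexCategory.mk n)
  ι :=
    { app := fun f => X.map f.obj.hom
      naturality := by
        intro f g u
        change X.map u.hom.left ≫ X.map g.obj.hom = X.map f.obj.hom ≫ 𝟙 _
        rw [← X.map_comp, Over.w u.hom, Category.comp_id] }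

/-- The latching map `Latch_n X → X^n` of a cosimplicial object. -/
noncomputable def cosimplicialLatchingMap (X : CosimplicialObject M) (n : ℕ)
    [HasColimit (cosimplicialLatchingDiagram X n)] :
    colimit (cosimplicialLatchingDiagram X n) ⟶ X.obj (SimplexCategory.mk n) :=
  colimit.desc _ (cosimplicialLatchingCocone X n)

open ModelCategory

/-- The simplicial set `[n] ↦ Hom_M(X^n, y)` of maps from a cosimplicial object to `y`. -/
def cosimplicialHomSSet {M : Type u} [Category.{v} M] (X : CosimplicialObject M) (y : M) :
    SSet.{v} :=
  X.op ⋙ yoneda.obj y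

/-- The map of simplicial sets `Hom_M(X^•, y) ⟶ Hom_M(X^•, z)` induced by `p : y ⟶ z`. -/
def cosimplicialHomSSetMap {M : Type u} [Category.{v} M] (X : CosimplicialObject M) {y z : M}
    (p : y ⟶ z) : cosimplicialHomSSet X y ⟶ cosimplicialHomSSet X z :=
  Functor.whiskerLeft X.op (yoneda.map p)

open Simplicial in
lemma aux_not_surj {D : SimplexCategory} {n : ℕ} (f : D ⟶ SimplexCategory.mk n)
    (h : D.len < n) : ¬ Function.Surjective f.toOrderHom := by
  intro hs
  have := Fintype.card_le_of_surjective _ hs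
  simp [SimplexCategory.len_mk] at this
  omega

lemma aux_image_len_lt {D : SimplexCategory} {n : ℕ} (φ : D ⟶ SimplexCategory.mk n)
    (h : ¬ Function.Surjective φ.toOrderHom) : (image φ).len < n := by
  by_contra h'
  have hle : (image φ).len ≤ n := SimplexCategory.len_le_of_mono (f := image.ι φ)
  have heq : (image φ).len = n := le_antisymm hle (le_of_not_gt h')
  have hbij : Function.Bijective (image.ι φ).toOrderHom := by
    rw [Fintype.bijective_iff_injective_and_card]
    exact ⟨SimplexCategory.mono_iff_injective.mp inferInstance, by simp [heq]⟩
  have hepi : Epi (image.ι φ) := SimplexCategory.epi_iff_surjective.mpr hbij.2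
  have : Epi φ := by rw [← image.fac φ]; exact epi_comp _ _
  exact h (SimplexCategory.epi_iff_surjective.mp this)

/-- If `x` is cofibrant and `Cyl^•(x)` is a cylinder object for `x`, then for
any acyclic fibration `y → z` the induced map `Hom_M(Cyl^•(x), y) → Hom_M(Cyl^•(x), z)` is an
acyclic fibration of simplicial sets, i.e. it has the right lifting property against all
boundary inclusions `∂Δⁿ → Δⁿ`. -/
theorem cylinder_homSSet_acyclic_fibration
    {M : Type u} [Category.{v} M] [HasFiniteLimits M] [HasFiniteColimits M] [ModelCategory M]
    (x : M) (hx : Cofibrant x) (X : CosimplicialObject M)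
    [∀ k : ℕ, HasColimit (cosimplicialLatchingDiagram X k)]
    (e : X.obj (SimplexCategory.mk 0) ≅ x)
    (hw : ∀ (n : ℕ) (i : Fin (n + 1)), W (M := M) (X.σ i))
    (hlatch : ∀ n : ℕ, 1 ≤ n → Cof (M := M) (cosimplicialLatchingMap X n))
    {y z : M} (p : y ⟶ z) (hpf : Fib (M := M) p) (hpw : W (M := M) p) :
    ∀ n : ℕ, HasLiftingProperty (SSet.boundary.{v} n).ι (cosimplicialHomSSetMap X p) := by
  classical
  -- Step 1: the latching maps have the lifting property against `p`.
  have hLP : ∀ k : ℕ, HasLiftingProperty (cosimplicialLatchingMap X k) p := by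
    intro k
    rcases Nat.eq_zero_or_pos k with hk | hk
    · subst hk
      have hcof0 : Cof (M := M) (initial.to (X.obj (SimplexCategory.mk 0))) := by
        refine ModelCategory.cof_retract (initial.to (X.obj (SimplexCategory.mk 0)))
          (initial.to x) (𝟙 _) (𝟙 _) e.hom e.inv (by simp) (by simp) ?_ ?_ hx
        · exact initial.hom_ext _ _
        · exact initial.hom_ext _ _
      haveI := lift_triv_fib (initial.to (X.obj (SimplexCategory.mk 0))) p hcof0 hpf hpw
      constructor
      intro f' g' sq
      have sq2 : CommSq (initial.to y) (initial.to (X.obj (SimplexCategory.mk 0))) p g' :=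
        ⟨initial.hom_ext _ _⟩
      refine ⟨⟨⟨sq2.lift, ?_, sq2.fac_right⟩⟩⟩
      apply colimit.hom_ext
      intro j
      exact absurd j.property.2 (Nat.not_lt_zero _)
    · exact lift_triv_fib _ p (hlatch k hk) hpf hpw
  intro n
  constructor
  intro F G sq
  -- element of `Δ[n]` corresponding to a map
  let φel : ∀ {D : SimplexCategory} (_ : D ⟶ SimplexCategory.mk n),
      (Δ[n] : SSet.{v}).obj (Opposite.op D) := fun g => ULift.up g
  have hns : ∀ (j : CosimplicialLatchingCat n),
      ¬ Function.Surjective (SSet.stdSimplex.asOrderHom (φel j.obj.hom)) := fun j =>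
    aux_not_surj j.obj.hom j.property.2
  -- the cocone on the latching diagram induced by `F`
  let c : Cocone (cosimplicialLatchingDiagram X n) :=
    { pt := y
      ι :=
        { app := fun j => F.app (Opposite.op j.obj.left) ⟨φel j.obj.hom, hns j⟩
          naturality := by
            intro j j' u
            dsimp [cosimplicialLatchingDiagram]
            change X.map u.hom.left ≫ F.app (Opposite.op j'.obj.left) ⟨φel j'.obj.hom, hns j'⟩ =
              F.app (Opposite.op j.obj.left) ⟨φel j.obj.hom, hns j⟩ ≫ 𝟙 y
            erw [Category.comp_id]
            have hnat := FunctorToTypes.naturality F u.hom.left.op ⟨φel j'.obj.hom, hns j'⟩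
            have hel : (SSet.boundary.{v} n).toSSet.map u.hom.left.op ⟨φel j'.obj.hom, hns j'⟩ =
                ⟨φel j.obj.hom, hns j⟩ := by
              apply Subtype.ext
              show ULift.up (u.hom.left ≫ j'.obj.hom) = _
              rw [Over.w u.hom]
            rw [hel] at hnat
            exact hnat.symm } }
  let ℓ : colimit (cosimplicialLatchingDiagram X n) ⟶ y := colimit.desc _ c
  let H : X.obj (SimplexCategory.mk n) ⟶ z := G.app (Opposite.op (SimplexCategory.mk n)) (φel (𝟙 _))
  -- `G` evaluated anywhere is determined by `H`
  have hG : ∀ {D : SimplexCategory} (g : D ⟶ SimplexCategory.mk n),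
      G.app (Opposite.op D) (φel g) = X.map g ≫ H := by
    intro D g
    have hnat := FunctorToTypes.naturality G g.op (φel (𝟙 _))
    have hel : (Δ[n] : SSet.{v}).map g.op (φel (𝟙 _)) = φel g := by
      show ULift.up (g ≫ 𝟙 _) = _
      rw [Category.comp_id]
    rw [hel] at hnat
    exact hnat
  have sqM : CommSq ℓ (cosimplicialLatchingMap X n) p H := by
    constructor
    apply colimit.hom_ext
    intro j
    rw [colimit.ι_desc_assoc]
    show c.ι.app j ≫ p = colimit.ι (cosimplicialLatchingDiagram X n) j ≫
      colimit.desc _ (cosimplicialLatchingCocone X n) ≫ H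
    erw [colimit.ι_desc_assoc]
    show F.app (Opposite.op j.obj.left) ⟨φel j.obj.hom, hns j⟩ ≫ p =
      (cosimplicialLatchingCocone X n).ι.app j ≫ H
    have hsq := ConcreteCategory.congr_hom (congr_app sq.w (Opposite.op j.obj.left)) ⟨φel j.obj.hom, hns j⟩
    have hp1 : F.app (Opposite.op j.obj.left) ⟨φel j.obj.hom, hns j⟩ ≫ p =
        G.app (Opposite.op j.obj.left) (φel j.obj.hom) := hsq
    rw [hp1]
    exact (hG j.obj.hom).trans rfl
  haveI := hLP n
  let lft : X.obj (SimplexCategory.mk n) ⟶ y := sqM.lift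
  -- the lift as a map of simplicial sets
  let Lift : (Δ[n] : SSet.{v}) ⟶ cosimplicialHomSSet X y :=
    { app := fun D => TypeCat.ofHom (fun α => X.map α.down ≫ lft)
      naturality := by
        intro D₁ D₂ w
        ext α
        show X.map (w.unop ≫ α.down) ≫ lft = X.map w.unop ≫ X.map α.down ≫ lft
        rw [X.map_comp, Category.assoc] }
  refine ⟨⟨⟨Lift, ?_, ?_⟩⟩⟩
  · -- restriction to the boundary is `F`
    apply NatTrans.ext
    funext D
    ext α
    obtain ⟨α, hα⟩ := α
    show X.map α.down ≫ lft = F.app D ⟨α, hα⟩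
    set φ : D.unop ⟶ SimplexCategory.mk n := α.down with hφ
    let j : CosimplicialLatchingCat n :=
      ⟨Over.mk (image.ι φ), ⟨inferInstanceAs (Mono (image.ι φ)), aux_image_len_lt φ hα⟩⟩
    have h1 : X.map (image.ι φ) ≫ lft =
        F.app (Opposite.op (image φ)) ⟨φel (image.ι φ), hns j⟩ := by
      have e1 : colimit.ι (cosimplicialLatchingDiagram X n) j ≫ cosimplicialLatchingMap X n =
          X.map (image.ι φ) := colimit.ι_desc _ _
      have e2 : colimit.ι (cosimplicialLatchingDiagram X n) j ≫ ℓ =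
          F.app (Opposite.op (image φ)) ⟨φel (image.ι φ), hns j⟩ := colimit.ι_desc _ _
      erw [← e1, Category.assoc, sqM.fac_left, e2]
    have h2 : (SSet.boundary.{v} n).toSSet.map (factorThruImage φ).op ⟨φel (image.ι φ), hns j⟩ =
        ⟨α, hα⟩ := by
      apply Subtype.ext
      show ULift.up (factorThruImage φ ≫ image.ι φ) = α
      rw [image.fac]
      rfl
    have hnat := FunctorToTypes.naturality F (factorThruImage φ).op ⟨φel (image.ι φ), hns j⟩
    rw [h2] at hnat
    calc X.map φ ≫ lft = X.map (factorThruImage φ ≫ image.ι φ) ≫ lft := by rw [image.fac]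
      _ = X.map (factorThruImage φ) ≫ X.map (image.ι φ) ≫ lft := by
          rw [X.map_comp, Category.assoc]
      _ = X.map (factorThruImage φ) ≫ F.app (Opposite.op (image φ)) ⟨φel (image.ι φ), hns j⟩ := by
          rw [h1]
      _ = (show X.obj D.unop ⟶ y from F.app D ⟨α, hα⟩) := hnat.symm
  · -- composition with `p` is `G`
    apply NatTrans.ext
    funext D
    ext α
    show (X.map α.down ≫ lft) ≫ p = G.app D α
    rw [Category.assoc, sqM.fac_right]
    exact (hG α.down).symm
end

section
/- Let M be a model category, x cofibrant and y fibrant. Then left homotopy (via any cylinder object for x) and right homotopy (via any path object for y) of maps x → y coincide, and the canonical map Hom_M(x,y)/∼ → Hom_{Ho(M)}(x,y) from homotopy classes of maps to morphisms in the homotopy category is a bijection. -/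
open CategoryTheory CategoryTheory.Limits

universe v u

open ModelCategory

/-- Left homotopy with respect to a cylinder `x ⊔ x —j→ Cl`. -/
def LeftHomotopic {M : Type u} [Category.{v} M] [HasFiniteLimits M] [HasFiniteColimits M]
    {x y Cl : M} (j : x ⨿ x ⟶ Cl) (f g : x ⟶ y) : Prop :=
  ∃ H : Cl ⟶ y, coprod.inl ≫ j ≫ H = f ∧ coprod.inr ≫ j ≫ H = g

/-- Right homotopy with respect to a path object `Pa —pr→ y × y`. -/
def RightHomotopic {M : Type u} [Category.{v} M] [HasFiniteLimits M] [HasFiniteColimits M]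
    {x y Pa : M} (pr : Pa ⟶ y ⨯ y) (f g : x ⟶ y) : Prop :=
  ∃ K : x ⟶ Pa, K ≫ pr ≫ prod.fst = f ∧ K ≫ pr ≫ prod.snd = g

namespace FTMC

attribute [simp] coprod.inl_desc coprod.inr_desc prod.lift_fst prod.lift_snd
attribute [simp] coprod.inl_desc_assoc coprod.inr_desc_assoc prod.lift_fst_assoc prod.lift_snd_assoc
attribute [simp] pullback.lift_fst pullback.lift_snd pullback.lift_fst_assoc pullback.lift_snd_assoc

variable {M : Type u} [Category.{v} M] [HasFiniteLimits M] [HasFiniteColimits M] [ModelCategory M]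

/-- extract a lift from a lifting property -/
lemma get_lift {a b n m : M} {i : a ⟶ b} {p : n ⟶ m} (h : HasLiftingProperty i p)
    {f : a ⟶ n} {g : b ⟶ m} (sq : f ≫ p = i ≫ g) :
    ∃ l : b ⟶ n, i ≫ l = f ∧ l ≫ p = g := by
  have sq' : CommSq f i p g := ⟨sq⟩
  letI := h.sq_hasLift sq'
  exact ⟨sq'.lift, sq'.fac_left, sq'.fac_right⟩

/-- morphisms with LLP against all trivial fibrations are cofibrations (retract argument) -/
lemma cof_of_llp {a b : M} (f : a ⟶ b)
    (h : ∀ ⦃n m : M⦄ (p : n ⟶ m), Fib p → W p → HasLiftingProperty f p) : Cof (M := M) f := by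
  obtain ⟨z, i, p, hi, hp, hpw, hfac⟩ := factor_c_wf (M := M) f
  obtain ⟨l, hl1, hl2⟩ := get_lift (h p hp hpw) (f := i) (g := 𝟙 b) (by simp [hfac])
  exact cof_retract f i (𝟙 a) (𝟙 a) l p (by simp) hl2 (by simpa using hl1.symm)
    (by simpa using hfac.symm) hi

/-- morphisms with RLP against all trivial cofibrations are fibrations (retract argument) -/
lemma fib_of_rlp {n m : M} (p : n ⟶ m)
    (h : ∀ ⦃a b : M⦄ (i : a ⟶ b), Cof i → W i → HasLiftingProperty i p) : Fib (M := M) p := by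
  obtain ⟨z, i, q, hi, hiw, hq, hfac⟩ := factor_cw_f (M := M) p
  obtain ⟨l, hl1, hl2⟩ := get_lift (h i hi hiw) (f := 𝟙 n) (g := q) (by simp [hfac])
  exact fib_retract p q i l (𝟙 m) (𝟙 m) hl1 (by simp) (by simpa using hfac)
    (by simpa using hl2) hq

lemma cof_comp {a b c : M} {f : a ⟶ b} {g : b ⟶ c} (hf : Cof (M := M) f)
    (hg : Cof (M := M) g) : Cof (M := M) (f ≫ g) :=
  cof_of_llp _ (fun _ _ p hp hpw => by
    haveI := lift_triv_fib f p hf hp hpw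
    haveI := lift_triv_fib g p hg hp hpw
    infer_instance)

lemma fib_comp {a b c : M} {f : a ⟶ b} {g : b ⟶ c} (hf : Fib (M := M) f)
    (hg : Fib (M := M) g) : Fib (M := M) (f ≫ g) :=
  fib_of_rlp _ (fun _ _ i hi hiw => by
    haveI := lift_cof_triv i f hi hiw hf
    haveI := lift_cof_triv i g hi hiw hg
    infer_instance)

lemma cofibrant_comp {a b : M} (ha : Cofibrant a) {i : a ⟶ b} (hi : Cof (M := M) i) :
    Cofibrant b := by
  have : initial.to b = initial.to a ≫ i := initial.hom_ext _ _
  rw [Cofibrant, this]; exact cof_comp ha hi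

lemma fibrant_comp {a b : M} (hb : Fibrant b) {p : a ⟶ b} (hp : Fib (M := M) p) :
    Fibrant a := by
  have : terminal.from a = p ≫ terminal.from b := terminal.hom_ext _ _
  rw [Fibrant, this]; exact fib_comp hp hb

/-- the left coprojection into the coproduct is a cofibration if the object is cofibrant -/
lemma cof_inl {x : M} (hx : Cofibrant x) : Cof (M := M) (coprod.inl : x ⟶ x ⨿ x) := by
  refine cof_of_llp _ (fun n m p hp hpw => ⟨fun {u} {v} sq => ?_⟩)
  obtain ⟨w, _, hw2⟩ := get_lift (lift_triv_fib _ p hx hp hpw)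
    (f := initial.to n) (g := coprod.inr ≫ v) (initial.hom_ext _ _)
  exact ⟨⟨⟨coprod.desc u w, by simp, by
    ext
    · simpa using sq.w
    · simpa using hw2⟩⟩⟩

lemma cof_inr {x : M} (hx : Cofibrant x) : Cof (M := M) (coprod.inr : x ⟶ x ⨿ x) := by
  refine cof_of_llp _ (fun n m p hp hpw => ⟨fun {u} {v} sq => ?_⟩)
  obtain ⟨w, _, hw2⟩ := get_lift (lift_triv_fib _ p hx hp hpw)
    (f := initial.to n) (g := coprod.inl ≫ v) (initial.hom_ext _ _)
  exact ⟨⟨⟨coprod.desc w u, by simp, by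
    ext
    · simpa using hw2
    · simpa using sq.w⟩⟩⟩

/-- the projection from the product is a fibration if the object is fibrant -/
lemma fib_fst {y : M} (hy : Fibrant y) : Fib (M := M) (prod.fst : y ⨯ y ⟶ y) := by
  refine fib_of_rlp _ (fun a b i hi hiw => ⟨fun {u} {v} sq => ?_⟩)
  obtain ⟨w, hw1, _⟩ := get_lift (lift_cof_triv i _ hi hiw hy)
    (f := u ≫ prod.snd) (g := terminal.from b) (terminal.hom_ext _ _)
  exact ⟨⟨⟨prod.lift v w, by
    ext
    · simpa using sq.w.symm
    · simpa using hw1, by simp⟩⟩⟩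



variable {M : Type u} [Category.{v} M] [HasFiniteLimits M] [HasFiniteColimits M] [ModelCategory M]

/-- chosen cylinder object (with trivial fibration onto the object) -/
structure CylObj (c : M) where
  Cl : M
  j : c ⨿ c ⟶ Cl
  q : Cl ⟶ c
  hj : Cof (M := M) j
  hqf : Fib (M := M) q
  hq : W (M := M) q
  hfold : j ≫ q = coprod.desc (𝟙 c) (𝟙 c)

/-- chosen path object (with trivial cofibration from the object) -/
structure PathObj (c : M) where
  P : M
  s : c ⟶ P
  pr : P ⟶ c ⨯ c
  hsc : Cof (M := M) s
  hs : W (M := M) s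
  hpr : Fib (M := M) pr
  hdiag : s ≫ pr = prod.lift (𝟙 c) (𝟙 c)

noncomputable def cyl (c : M) : CylObj c := Classical.choice (by
  obtain ⟨z, i, p, h1, h2, h3, h4⟩ := factor_c_wf (M := M) (coprod.desc (𝟙 c) (𝟙 c))
  exact ⟨⟨z, i, p, h1, h2, h3, h4⟩⟩)

noncomputable def path (c : M) : PathObj c := Classical.choice (by
  obtain ⟨z, i, p, h1, h2, h3, h4⟩ := factor_cw_f (M := M) (prod.lift (𝟙 c) (𝟙 c))
  exact ⟨⟨z, i, p, h1, h2, h3, h4⟩⟩)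

section Conversions

variable {x y Cl' Pa' : M} {u v : x ⟶ y}

/-- left homotopy to right homotopy, primitive version -/
lemma L2R (j' : x ⨿ x ⟶ Cl') (q' : Cl' ⟶ x) (hfold' : j' ≫ q' = coprod.desc (𝟙 x) (𝟙 x))
    (s' : y ⟶ Pa') (pr' : Pa' ⟶ y ⨯ y) (hdiag' : s' ≫ pr' = prod.lift (𝟙 y) (𝟙 y))
    (hlift : HasLiftingProperty (coprod.inl ≫ j') pr')
    (h : LeftHomotopic j' u v) : RightHomotopic pr' u v := by
  obtain ⟨H, h1, h2⟩ := h
  obtain ⟨L, hL1, hL2⟩ := get_lift hlift (f := u ≫ s')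
    (g := prod.lift (q' ≫ u) H) (by
      ext
      · simp [reassoc_of% hdiag', reassoc_of% hfold']
      · simp [reassoc_of% hdiag', h1])
  refine ⟨coprod.inr ≫ j' ≫ L, ?_, ?_⟩
  · have e : (coprod.inr ≫ j' ≫ L) ≫ pr' ≫ prod.fst
        = coprod.inr ≫ j' ≫ (L ≫ pr') ≫ prod.fst := by simp
    rw [e, hL2]
    simp [reassoc_of% hfold']
  · have e : (coprod.inr ≫ j' ≫ L) ≫ pr' ≫ prod.snd
        = coprod.inr ≫ j' ≫ (L ≫ pr') ≫ prod.snd := by simp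
    rw [e, hL2]
    simp [h2]

/-- right homotopy to left homotopy, primitive version -/
lemma R2L (j' : x ⨿ x ⟶ Cl') (q' : Cl' ⟶ x) (hfold' : j' ≫ q' = coprod.desc (𝟙 x) (𝟙 x))
    (s' : y ⟶ Pa') (pr' : Pa' ⟶ y ⨯ y) (hdiag' : s' ≫ pr' = prod.lift (𝟙 y) (𝟙 y))
    (hlift : HasLiftingProperty j' (pr' ≫ prod.fst))
    (h : RightHomotopic pr' u v) : LeftHomotopic j' u v := by
  obtain ⟨K, h1, h2⟩ := h
  obtain ⟨L, hL1, hL2⟩ := get_lift hlift (f := coprod.desc (u ≫ s') K)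
    (g := q' ≫ u) (by
      ext
      · simp [reassoc_of% hdiag', reassoc_of% hfold']
      · simp [reassoc_of% hfold', h1])
  refine ⟨L ≫ pr' ≫ prod.snd, ?_, ?_⟩
  · simp [reassoc_of% hL1, reassoc_of% hdiag']
  · simp [reassoc_of% hL1, h2]

end Conversions

/-- The homotopy relation: left homotopic with respect to *some* cylinder object. -/
def HRel {x y : M} (u v : x ⟶ y) : Prop :=
  ∃ (Cl' : M) (j' : x ⨿ x ⟶ Cl') (q' : Cl' ⟶ x),
    Cof (M := M) j' ∧ W (M := M) q' ∧ j' ≫ q' = coprod.desc (𝟙 x) (𝟙 x) ∧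
    LeftHomotopic j' u v

section HRelLemmas

variable {x y : M} {u v w' : x ⟶ y}

lemma HRel.refl (u : x ⟶ y) : HRel u u := by
  obtain ⟨Cl', j', q', hj, hqf, hq, hfold⟩ := cyl x
  exact ⟨Cl', j', q', hj, hq, hfold, q' ≫ u, by simp [reassoc_of% hfold],
    by simp [reassoc_of% hfold]⟩

lemma cof_iso_comp {a b c : M} (e : a ≅ b) {f : b ⟶ c} (hf : Cof (M := M) f) :
    Cof (M := M) (e.hom ≫ f) :=
  cof_retract (e.hom ≫ f) f e.hom e.inv (𝟙 c) (𝟙 c) (by simp) (by simp) (by simp) (by simp) hf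

lemma HRel.symm (h : HRel u v) : HRel v u := by
  obtain ⟨Cl', j', q', hj, hq, hfold, H, h1, h2⟩ := h
  refine ⟨Cl', (coprod.braiding x x).hom ≫ j', q', cof_iso_comp _ hj, hq, by
    rw [Category.assoc, hfold]; ext <;> simp [coprod.braiding], H, ?_, ?_⟩
  · simpa [coprod.braiding] using h2
  · simpa [coprod.braiding] using h1

/-- postcomposition preserves the homotopy relation -/
lemma HRel.post (h : HRel u v) {z : M} (w : y ⟶ z) : HRel (u ≫ w) (v ≫ w) := by
  obtain ⟨Cl', j', q', hj, hq, hfold, H, h1, h2⟩ := h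
  exact ⟨Cl', j', q', hj, hq, hfold, H ≫ w, by rw [← reassoc_of% h1], by rw [← reassoc_of% h2]⟩

/-- right homotopies precompose -/
lemma _root_.RightHomotopic.pre {z Pa' : M} {pr' : Pa' ⟶ y ⨯ y} (h : RightHomotopic pr' u v)
    (w : z ⟶ x) : RightHomotopic pr' (w ≫ u) (w ≫ v) := by
  obtain ⟨K, h1, h2⟩ := h
  exact ⟨w ≫ K, by rw [Category.assoc, h1], by rw [Category.assoc, h2]⟩

/-- from the homotopy relation to a right homotopy with respect to any path object;
needs the source to be cofibrant -/
lemma HRel.toRight (hx : Cofibrant x) {Pa' : M} (s' : y ⟶ Pa') (pr' : Pa' ⟶ y ⨯ y)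
    (hpr' : Fib (M := M) pr') (hdiag' : s' ≫ pr' = prod.lift (𝟙 y) (𝟙 y))
    (h : HRel u v) : RightHomotopic pr' u v := by
  obtain ⟨Cl', j', q', hj, hq, hfold, hH⟩ := h
  have hw : W (M := M) (coprod.inl ≫ j') :=
    w_cancel_right _ q' hq (by rw [Category.assoc, hfold]; simpa using w_id x)
  have hc : Cof (M := M) (coprod.inl ≫ j') := cof_comp (cof_inl hx) hj
  exact L2R j' q' hfold s' pr' hdiag' (lift_cof_triv _ _ hc hw hpr') ⟨hH.choose, hH.choose_spec⟩

/-- from a right homotopy with respect to a good path object back to the homotopy relation;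
needs the target to be fibrant -/
lemma _root_.RightHomotopic.toHRel (hy : Fibrant y) {Pa' : M} (s' : y ⟶ Pa') (pr' : Pa' ⟶ y ⨯ y)
    (hs' : W (M := M) s') (hpr' : Fib (M := M) pr')
    (hdiag' : s' ≫ pr' = prod.lift (𝟙 y) (𝟙 y))
    (h : RightHomotopic pr' u v) : HRel u v := by
  obtain ⟨Cl', j', q', hj, hqf, hq, hfold⟩ := cyl x
  have hwf : W (M := M) (pr' ≫ prod.fst) :=
    w_cancel_left s' _ hs' (by rw [← Category.assoc, hdiag']; simpa using w_id y)
  have hff : Fib (M := M) (pr' ≫ prod.fst) := fib_comp hpr' (fib_fst hy)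
  exact ⟨Cl', j', q', hj, hq, hfold,
    R2L j' q' hfold s' pr' hdiag' (lift_triv_fib _ _ hj hff hwf) h⟩

/-- precomposition preserves homotopy (source cofibrant, target fibrant) -/
lemma HRel.pre (hx : Cofibrant x) (hy : Fibrant y) (h : HRel u v) {z : M} (w : z ⟶ x) :
    HRel (w ≫ u) (w ≫ v) := by
  obtain ⟨P, s', pr', hsc, hs', hpr', hdiag'⟩ := path y
  exact ((h.toRight hx s' pr' hpr' hdiag').pre w).toHRel hy s' pr' hs' hpr' hdiag'

end HRelLemmas


section MoreLemmas

variable {x y : M}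

/-- Lemma A: two maps that agree after composing with a trivial fibration are homotopic. -/
lemma hrel_of_comp_eq {b' : M} (p : b' ⟶ y) (hp : Fib (M := M) p) (hpw : W (M := M) p)
    (u v : x ⟶ b') (h : u ≫ p = v ≫ p) : HRel u v := by
  obtain ⟨Cl', j', q', hj, hqf, hq, hfold⟩ := cyl x
  obtain ⟨H, hH1, hH2⟩ := get_lift (lift_triv_fib j' p hj hp hpw)
    (f := coprod.desc u v) (g := q' ≫ u ≫ p) (by
      ext
      · simp [reassoc_of% hfold]
      · simp [reassoc_of% hfold, h])
  exact ⟨Cl', j', q', hj, hq, hfold, H, by simp [hH1], by simp [hH1]⟩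

/-- Lemma A': two maps that agree after precomposition with a trivial cofibration are
right homotopic (fibrant target). -/
lemma right_of_precomp_eq {a' : M} (i : x ⟶ a') (hi : Cof (M := M) i) (hiw : W (M := M) i)
    (hy : Fibrant y) {Pa' : M} (s' : y ⟶ Pa') (pr' : Pa' ⟶ y ⨯ y)
    (hpr' : Fib (M := M) pr') (hdiag' : s' ≫ pr' = prod.lift (𝟙 y) (𝟙 y))
    (k1 k2 : a' ⟶ y) (h : i ≫ k1 = i ≫ k2) : RightHomotopic pr' k1 k2 := by
  obtain ⟨K, hK1, hK2⟩ := get_lift (lift_cof_triv i pr' hi hiw hpr')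
    (f := i ≫ k1 ≫ s') (g := prod.lift k1 k2) (by
      ext
      · simp [reassoc_of% hdiag']
      · simp [reassoc_of% hdiag', h])
  exact ⟨K, by simp [reassoc_of% hK2], by simp [reassoc_of% hK2]⟩

/-- Lemma B: right homotopies extend along trivial cofibrations. -/
lemma right_extend {a' : M} (i : x ⟶ a') (hi : Cof (M := M) i) (hiw : W (M := M) i)
    {Pa' : M} (pr' : Pa' ⟶ y ⨯ y) (hpr' : Fib (M := M) pr')
    (u v : a' ⟶ y) (h : RightHomotopic pr' (i ≫ u) (i ≫ v)) : RightHomotopic pr' u v := by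
  obtain ⟨K, hK1, hK2⟩ := h
  obtain ⟨K', hK'1, hK'2⟩ := get_lift (lift_cof_triv i pr' hi hiw hpr')
    (f := K) (g := prod.lift u v) (by
      ext
      · simp [hK1]
      · simp [hK2])
  exact ⟨K', by simp [reassoc_of% hK'2], by simp [reassoc_of% hK'2]⟩

/-- transitivity of the homotopy relation (cofibrant source, fibrant target) -/
lemma HRel.trans (hx : Cofibrant x) (hy : Fibrant y) {u v w : x ⟶ y}
    (h1 : HRel u v) (h2 : HRel v w) : HRel u w := by
  obtain ⟨Pa', s', pr', hsc, hs', hpr', hdiag'⟩ := path y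
  obtain ⟨K1, hK11, hK12⟩ := h1.toRight hx s' pr' hpr' hdiag'
  obtain ⟨K2, hK21, hK22⟩ := h2.toRight hx s' pr' hpr' hdiag'
  -- composite path object via pullback
  have hwfst : W (M := M) (pr' ≫ prod.fst) :=
    w_cancel_left s' _ hs' (by rw [← Category.assoc, hdiag']; simpa using w_id y)
  have hffst : Fib (M := M) (pr' ≫ prod.fst) := fib_comp hpr' (fib_fst hy)
  let Pb := pullback (pr' ≫ prod.snd) (pr' ≫ prod.fst)
  let p1 : Pb ⟶ Pa' := pullback.fst _ _
  let p2 : Pb ⟶ Pa' := pullback.snd _ _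
  let pr2 : Pb ⟶ y ⨯ y := prod.lift (p1 ≫ pr' ≫ prod.fst) (p2 ≫ pr' ≫ prod.snd)
  let s2 : y ⟶ Pb := pullback.lift s' s' (by rw [← Category.assoc, ← Category.assoc, hdiag']; simp)
  have hs2diag : s2 ≫ pr2 = prod.lift (𝟙 y) (𝟙 y) := by
    ext
    · simp only [pr2, Category.assoc, prod.lift_fst]
      rw [← Category.assoc, show s2 ≫ p1 = s' from pullback.lift_fst _ _ _, ← Category.assoc,
        hdiag']; simp
    · simp only [pr2, Category.assoc, prod.lift_snd]
      rw [← Category.assoc, show s2 ≫ p2 = s' from pullback.lift_snd _ _ _, ← Category.assoc,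
        hdiag']; simp
  -- the candidate right homotopy
  have hcond : K1 ≫ pr' ≫ prod.snd = K2 ≫ pr' ≫ prod.fst := by rw [hK12, hK21]
  let K : x ⟶ Pb := pullback.lift K1 K2 (by
    rw [← Category.assoc, ← Category.assoc] at hcond ⊢; exact hcond)
  have hK : RightHomotopic pr2 u w := by
    refine ⟨K, ?_, ?_⟩
    · have : K ≫ p1 = K1 := pullback.lift_fst _ _ _
      simp only [pr2, Category.assoc, prod.lift_fst]
      rw [← Category.assoc, this]; exact hK11
    · have : K ≫ p2 = K2 := pullback.lift_snd _ _ _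
      simp only [pr2, Category.assoc, prod.lift_snd]
      rw [← Category.assoc, this]; exact hK22
  -- lifting property of the chosen cylinder against pr2 ≫ fst
  obtain ⟨Cl', j', q', hj, hqf, hq, hfold⟩ := cyl x
  have hp1 : HasLiftingProperty j' p1 := by
    constructor
    intro f g sq
    obtain ⟨l2, hl21, hl22⟩ := get_lift (lift_triv_fib j' _ hj hffst hwfst)
      (f := f ≫ p2) (g := g ≫ pr' ≫ prod.snd) (by
        have hc := pullback.condition (f := pr' ≫ prod.snd) (g := pr' ≫ prod.fst)
        calc (f ≫ p2) ≫ pr' ≫ prod.fst = f ≫ (p2 ≫ pr' ≫ prod.fst) := by simp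
          _ = f ≫ (p1 ≫ pr' ≫ prod.snd) := by rw [← hc]
          _ = (f ≫ p1) ≫ pr' ≫ prod.snd := by simp
          _ = (j' ≫ g) ≫ pr' ≫ prod.snd := by rw [sq.w]
          _ = j' ≫ g ≫ pr' ≫ prod.snd := by simp)
    refine ⟨⟨⟨pullback.lift g l2 ?_, ?_, pullback.lift_fst _ _ _⟩⟩⟩
    · exact hl22.symm
    · apply pullback.hom_ext
      · simpa using sq.w.symm
      · simpa using hl21
  have hlift : HasLiftingProperty j' (pr2 ≫ prod.fst) := by
    have e : pr2 ≫ prod.fst = p1 ≫ pr' ≫ prod.fst := by simp [pr2]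
    rw [e]
    haveI := hp1
    haveI := lift_triv_fib j' _ hj hffst hwfst
    infer_instance
  exact ⟨Cl', j', q', hj, hq, hfold, R2L j' q' hfold s2 pr2 hs2diag hlift hK⟩

/-- the homotopy relation is an equivalence relation for cofibrant source, fibrant target -/
lemma hrel_equiv (hx : Cofibrant x) (hy : Fibrant y) :
    Equivalence (fun u v : x ⟶ y => HRel u v) :=
  ⟨HRel.refl, HRel.symm, fun h1 h2 => h1.trans hx hy h2⟩

/-- extension along a trivial cofibration into a fibrant object -/
lemma exists_extension {a b n : M} (i : a ⟶ b) (hi : Cof (M := M) i) (hiw : W (M := M) i)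
    (hn : Fibrant n) (v : a ⟶ n) : ∃ vt : b ⟶ n, i ≫ vt = v := by
  obtain ⟨l, hl1, _⟩ := get_lift (lift_cof_triv i (terminal.from n) hi hiw hn)
    (f := v) (g := terminal.from b) (terminal.hom_ext _ _)
  exact ⟨l, hl1⟩

/-- lifts through a trivial fibration from a cofibrant object -/
lemma exists_lift_cofibrant {a n m : M} (ha : Cofibrant a) (p : n ⟶ m) (hp : Fib (M := M) p)
    (hpw : W (M := M) p) (φ : a ⟶ m) : ∃ ψ : a ⟶ n, ψ ≫ p = φ := by
  obtain ⟨l, _, hl2⟩ := get_lift (lift_triv_fib (initial.to a) p ha hp hpw)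
    (f := initial.to n) (g := φ) (initial.hom_ext _ _)
  exact ⟨l, hl2⟩

/-- Whitehead: a weak equivalence between cofibrant-fibrant objects has a homotopy inverse. -/
lemma whitehead {c d : M} (hcc : Cofibrant c) (hcf : Fibrant c) (hdc : Cofibrant d)
    (hdf : Fibrant d) (w : c ⟶ d) (hw : W (M := M) w) :
    ∃ w' : d ⟶ c, HRel (w ≫ w') (𝟙 c) ∧ HRel (w' ≫ w) (𝟙 d) := by
  obtain ⟨e, i, p, hi, hiw, hp, hfac⟩ := factor_cw_f (M := M) w
  have hpw : W (M := M) p := w_cancel_left i p hiw (by rw [hfac]; exact hw)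
  have hec : Cofibrant e := cofibrant_comp hcc hi
  have hef : Fibrant e := fibrant_comp hdf hp
  obtain ⟨r, hr⟩ := exists_lift_cofibrant hdc p hp hpw (𝟙 d)
  obtain ⟨r', hr'⟩ := exists_extension i hi hiw hcf (𝟙 c)
  refine ⟨r ≫ r', ?_, ?_⟩
  · -- w ≫ r ≫ r' = i ≫ p ≫ r ≫ r' ~ i ≫ r' = 𝟙
    have h1 : HRel (p ≫ r) (𝟙 e) := hrel_of_comp_eq p hp hpw _ _ (by simp [hr])
    have h2 : HRel (p ≫ r ≫ r') (r') := by simpa using h1.post r'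
    have h3 : HRel (i ≫ p ≫ r ≫ r') (i ≫ r') := h2.pre hec hcf i
    rw [hr'] at h3
    have e1 : w ≫ r ≫ r' = i ≫ p ≫ r ≫ r' := by rw [← hfac]; simp
    rwa [← e1] at h3
  · -- r ≫ r' ≫ w = r ≫ r' ≫ i ≫ p ~ r ≫ p = 𝟙
    have h1 : RightHomotopic (path e).pr (r' ≫ i) (𝟙 e) :=
      right_of_precomp_eq i hi hiw hef (path e).s (path e).pr (path e).hpr (path e).hdiag _ _
        (by rw [← Category.assoc, hr']; simp)
    have h2 : RightHomotopic (path e).pr (r ≫ r' ≫ i) (r ≫ 𝟙 e) := h1.pre r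
    have h3 : HRel (r ≫ r' ≫ i) r := by
      simpa using h2.toHRel hef (path e).s (path e).pr (path e).hs (path e).hpr (path e).hdiag
    have h4 : HRel (r ≫ r' ≫ i ≫ p) (r ≫ p) := by simpa using h3.post p
    rw [hr] at h4
    have e1 : r ≫ r' ≫ w = r ≫ r' ≫ i ≫ p := by rw [← hfac]
    rw [← e1] at h4
    simpa using h4

end MoreLemmas

section DCat

/-- chosen cofibrant and fibrant replacements -/
structure Repl (c : M) where
  Qo : M
  p : Qo ⟶ c
  hpf : Fib (M := M) p
  hpw : W (M := M) p
  hQ : Cofibrant Qo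
  R : M
  i : Qo ⟶ R
  hic : Cof (M := M) i
  hiw : W (M := M) i
  hRf : Fibrant R
  hRc : Cofibrant R

noncomputable def repl (c : M) : Repl c := Classical.choice (by
  obtain ⟨z, i0, p, h1, h2, h3, h4⟩ := factor_c_wf (M := M) (initial.to c)
  have hz : Cofibrant z := by
    have e : initial.to z = i0 := initial.hom_ext _ _
    rw [Cofibrant, e]; exact h1
  obtain ⟨r, i1, q, g1, g2, g3, g4⟩ := factor_cw_f (M := M) (terminal.from z)
  have hr : Fibrant r := by
    have e : terminal.from r = q := terminal.hom_ext _ _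
    rw [Fibrant, e]; exact g3
  exact ⟨⟨z, p, h2, h3, hz, r, i1, g1, g2, hr, cofibrant_comp hz g1⟩⟩)

variable (M) in
/-- the objects of the auxiliary homotopy category -/
structure DObj where
  un : M

/-- extension of a map `Q b ⟶ R c` to `R b ⟶ R c` -/
noncomputable def dext {b c : M} (v : (repl b).Qo ⟶ (repl c).R) : (repl b).R ⟶ (repl c).R :=
  (exists_extension (repl b).i (repl b).hic (repl b).hiw (repl c).hRf v).choose

lemma dext_spec {b c : M} (v : (repl b).Qo ⟶ (repl c).R) : (repl b).i ≫ dext v = v :=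
  (exists_extension (repl b).i (repl b).hic (repl b).hiw (repl c).hRf v).choose_spec

/-- two extensions of homotopic maps are homotopic after composing -/
lemma dcomp_wd_right {a b c : M} (u : (repl a).Qo ⟶ (repl b).R)
    (v v' : (repl b).Qo ⟶ (repl c).R) (h : HRel v v') :
    HRel (u ≫ dext v) (u ≫ dext v') := by
  have h1 : RightHomotopic (path (repl c).R).pr v v' :=
    h.toRight (repl b).hQ _ _ (path _).hpr (path _).hdiag
  have h2 : RightHomotopic (path (repl c).R).pr (dext v) (dext v') := by
    refine right_extend (repl b).i (repl b).hic (repl b).hiw _ (path _).hpr _ _ ?_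
    rw [dext_spec, dext_spec]; exact h1
  exact (h2.pre u).toHRel (repl c).hRf _ _ (path _).hs (path _).hpr (path _).hdiag

/-- homotopic extensions from equal restrictions -/
lemma dext_eq_hrel {a b c : M} (u : (repl a).Qo ⟶ (repl b).R)
    (e : (repl b).R ⟶ (repl c).R) (v : (repl b).Qo ⟶ (repl c).R)
    (he : (repl b).i ≫ e = v) : HRel (u ≫ dext v) (u ≫ e) := by
  have h1 : RightHomotopic (path (repl c).R).pr (dext v) e :=
    right_of_precomp_eq (repl b).i (repl b).hic (repl b).hiw (repl c).hRf _ _ (path _).hpr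
      (path _).hdiag _ _ (by rw [dext_spec, he])
  exact (h1.pre u).toHRel (repl c).hRf _ _ (path _).hs (path _).hpr (path _).hdiag

noncomputable instance : Category.{v} (DObj M) where
  Hom a b := Quot (fun u v : (repl a.un).Qo ⟶ (repl b.un).R => HRel u v)
  id a := Quot.mk _ (repl a.un).i
  comp {a b c} φ ψ :=
    Quot.lift₂ (fun u v => Quot.mk _ (u ≫ dext v))
      (fun u v v' h => Quot.sound (dcomp_wd_right u v v' h))
      (fun u u' v h => Quot.sound (h.post (dext v))) φ ψ
  id_comp {a b} φ := by
    induction φ using Quot.ind with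
    | _ u => exact congrArg (Quot.mk _) (dext_spec u)
  comp_id {a b} φ := by
    induction φ using Quot.ind with
    | _ u =>
      apply Quot.sound
      have h := dext_eq_hrel u (𝟙 (repl b.un).R) (repl b.un).i (by simp)
      simpa using h
  assoc {a b c d} φ ψ χ := by
    induction φ using Quot.ind with
    | _ u =>
    induction ψ using Quot.ind with
    | _ v =>
    induction χ using Quot.ind with
    | _ w =>
      apply Quot.sound
      have h := dext_eq_hrel u (dext v ≫ dext w) (v ≫ dext w)
        (by rw [← Category.assoc, dext_spec])
      simpa using h.symm

/-- chosen lift of a morphism to the cofibrant replacements -/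
noncomputable def flift {a b : M} (f : a ⟶ b) : (repl a).Qo ⟶ (repl b).Qo :=
  (exists_lift_cofibrant (repl a).hQ (repl b).p (repl b).hpf (repl b).hpw
    ((repl a).p ≫ f)).choose

lemma flift_spec {a b : M} (f : a ⟶ b) : flift f ≫ (repl b).p = (repl a).p ≫ f :=
  (exists_lift_cofibrant (repl a).hQ (repl b).p (repl b).hpf (repl b).hpw
    ((repl a).p ≫ f)).choose_spec

/-- the functor from `M` to the auxiliary homotopy category -/
noncomputable def FD : M ⥤ DObj M where
  obj a := ⟨a⟩
  map {a b} f := Quot.mk _ (flift f ≫ (repl b).i)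
  map_id a := by
    apply Quot.sound
    have h := hrel_of_comp_eq (repl a).p (repl a).hpf (repl a).hpw (flift (𝟙 a)) (𝟙 _)
      (by rw [flift_spec]; simp)
    simpa using h.post (repl a).i
  map_comp {a b c} f g := by
    apply Quot.sound
    have e : (flift f ≫ (repl b).i) ≫ dext (flift g ≫ (repl c).i)
        = flift f ≫ flift g ≫ (repl c).i := by
      rw [Category.assoc, dext_spec]
    rw [e]
    have h := hrel_of_comp_eq (repl c).p (repl c).hpf (repl c).hpw (flift (f ≫ g))
      (flift f ≫ flift g) (by
        calc flift (f ≫ g) ≫ (repl c).p = (repl a).p ≫ f ≫ g := flift_spec _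
          _ = ((repl a).p ≫ f) ≫ g := by simp
          _ = (flift f ≫ (repl b).p) ≫ g := by rw [flift_spec]
          _ = flift f ≫ (repl b).p ≫ g := by simp
          _ = flift f ≫ flift g ≫ (repl c).p := by rw [flift_spec]
          _ = (flift f ≫ flift g) ≫ (repl c).p := by simp)
    simpa using h.post (repl c).i

lemma FD_inverts : (W (M := M)).IsInvertedBy (FD (M := M)) := by
  intro a b f hf
  set u : (repl a).Qo ⟶ (repl b).R := flift f ≫ (repl b).i with hu_def
  have hfw : W (M := M) (flift f) := w_cancel_right _ (repl b).p (repl b).hpw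
    (by rw [flift_spec]; exact w_comp _ _ (repl a).hpw hf)
  have hu : W (M := M) u := w_comp _ _ hfw (repl b).hiw
  have hextw : W (M := M) (dext u) := w_cancel_left (repl a).i _ (repl a).hiw
    (by rw [dext_spec]; exact hu)
  obtain ⟨w', hw1, hw2⟩ := whitehead (repl a).hRc (repl a).hRf (repl b).hRc (repl b).hRf
    (dext u) hextw
  refine ⟨⟨Quot.mk _ ((repl b).i ≫ w'), ?_, ?_⟩⟩
  · -- [u] ≫ [i_b ≫ w'] = id
    apply Quot.sound
    have h1 : HRel (u ≫ dext ((repl b).i ≫ w')) (u ≫ w') := dext_eq_hrel u w' _ rfl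
    have h2 : HRel ((repl a).i ≫ dext u ≫ w') ((repl a).i ≫ 𝟙 _) :=
      hw1.pre (repl a).hRc (repl a).hRf (repl a).i
    have e : u ≫ w' = (repl a).i ≫ dext u ≫ w' := by
      rw [← Category.assoc, dext_spec]
    rw [e] at h1
    have h3 := h1.trans (repl a).hQ (repl a).hRf (by simpa using h2)
    exact h3
  · -- [i_b ≫ w'] ≫ [u] = id
    apply Quot.sound
    have h1 : HRel (((repl b).i ≫ w') ≫ dext u) ((repl b).i ≫ 𝟙 _) := by
      have := hw2.pre (repl b).hRc (repl b).hRf (repl b).i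
      simpa using this
    rw [Category.comp_id] at h1; exact h1

end DCat

section Loc

open Localization.Construction

/-- the induced functor on the localization -/
noncomputable def LD : (W (M := M)).Localization ⥤ DObj M :=
  Localization.Construction.lift (FD (M := M)) FD_inverts

lemma LD_Q {a b : M} (f : a ⟶ b) :
    (LD (M := M)).map ((W (M := M)).Q.map f) = (FD (M := M)).map f := by
  have h := Functor.congr_hom (Localization.Construction.fac (FD (M := M)) FD_inverts) f
  exact h.trans (by erw [eqToHom_refl, eqToHom_refl, Category.id_comp, Category.comp_id])

/-- left homotopic maps are identified in the localization -/
lemma Q_map_eq_of_left {x y Cl' : M} (j' : x ⨿ x ⟶ Cl') (q' : Cl' ⟶ x)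
    (hq : W (M := M) q') (hfold : j' ≫ q' = coprod.desc (𝟙 x) (𝟙 x))
    {u v : x ⟶ y} (h : LeftHomotopic j' u v) :
    (W (M := M)).Q.map u = (W (M := M)).Q.map v := by
  obtain ⟨H, h1, h2⟩ := h
  haveI : IsIso ((W (M := M)).Q.map q') := (W (M := M)).Q_inverts _ hq
  have e1 : (W (M := M)).Q.map (coprod.inl ≫ j') ≫ (W (M := M)).Q.map q' = 𝟙 _ := by
    rw [← CategoryTheory.Functor.map_comp,
      show (coprod.inl ≫ j') ≫ q' = 𝟙 x by rw [Category.assoc, hfold]; simp,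
      CategoryTheory.Functor.map_id]
  have e2 : (W (M := M)).Q.map (coprod.inr ≫ j') ≫ (W (M := M)).Q.map q' = 𝟙 _ := by
    rw [← CategoryTheory.Functor.map_comp,
      show (coprod.inr ≫ j') ≫ q' = 𝟙 x by rw [Category.assoc, hfold]; simp,
      CategoryTheory.Functor.map_id]
  have e3 : (W (M := M)).Q.map (coprod.inl ≫ j') = (W (M := M)).Q.map (coprod.inr ≫ j') :=
    (cancel_mono ((W (M := M)).Q.map q')).1 (e1.trans e2.symm)
  have f1 : (coprod.inl ≫ j') ≫ H = u := by rw [Category.assoc]; exact h1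
  have f2 : (coprod.inr ≫ j') ≫ H = v := by rw [Category.assoc]; exact h2
  calc (W (M := M)).Q.map u
      = (W (M := M)).Q.map (coprod.inl ≫ j') ≫ (W (M := M)).Q.map H := by
        rw [← CategoryTheory.Functor.map_comp, f1]
    _ = (W (M := M)).Q.map (coprod.inr ≫ j') ≫ (W (M := M)).Q.map H := by rw [e3]
    _ = (W (M := M)).Q.map v := by rw [← CategoryTheory.Functor.map_comp, f2]

lemma Q_map_eq_of_hrel {x y : M} {u v : x ⟶ y} (h : HRel u v) :
    (W (M := M)).Q.map u = (W (M := M)).Q.map v := by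
  obtain ⟨Cl', j', q', hj, hq, hfold, hH⟩ := h
  exact Q_map_eq_of_left j' q' hq hfold ⟨hH.choose, hH.choose_spec⟩

/-- reconstruction of a morphism in the localization from a homotopy class -/
noncomputable def recHom (a b : M) (u : (repl a).Qo ⟶ (repl b).R) :
    (W (M := M)).Q.obj a ⟶ (W (M := M)).Q.obj b :=
  haveI : IsIso ((W (M := M)).Q.map (repl a).p) := (W (M := M)).Q_inverts _ (repl a).hpw
  haveI : IsIso ((W (M := M)).Q.map (repl b).i) := (W (M := M)).Q_inverts _ (repl b).hiw
  inv ((W (M := M)).Q.map (repl a).p) ≫ (W (M := M)).Q.map u ≫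
    inv ((W (M := M)).Q.map (repl b).i) ≫ (W (M := M)).Q.map (repl b).p

noncomputable def recD {a b : M} :
    ((FD (M := M)).obj a ⟶ (FD (M := M)).obj b) → ((W (M := M)).Q.obj a ⟶ (W (M := M)).Q.obj b) :=
  Quot.lift (recHom a b) (fun u v h => by
    unfold recHom
    erw [Q_map_eq_of_hrel h]; rfl)

lemma recD_comp {a b c : M} (φ : (FD (M := M)).obj a ⟶ (FD (M := M)).obj b)
    (ψ : (FD (M := M)).obj b ⟶ (FD (M := M)).obj c) :
    recD (φ ≫ ψ) = recD φ ≫ recD ψ := by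
  induction φ using Quot.ind with
  | _ u =>
  induction ψ using Quot.ind with
  | _ v =>
    change (repl a).Qo ⟶ (repl b).R at u
    change (repl b).Qo ⟶ (repl c).R at v
    show recHom a c (u ≫ dext v) = recHom a b u ≫ recHom b c v
    haveI : IsIso ((W (M := M)).Q.map (repl b).i) := (W (M := M)).Q_inverts _ (repl b).hiw
    haveI : IsIso ((W (M := M)).Q.map (repl b).p) := (W (M := M)).Q_inverts _ (repl b).hpw
    have hd : (W (M := M)).Q.map (dext v)
        = inv ((W (M := M)).Q.map (repl b).i) ≫ (W (M := M)).Q.map v := by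
      rw [IsIso.eq_inv_comp, ← CategoryTheory.Functor.map_comp, dext_spec]
    simp [recHom, hd, Functor.map_comp]

lemma recD_id (a : M) : recD (𝟙 ((FD (M := M)).obj a)) = 𝟙 ((W (M := M)).Q.obj a) := by
  show recHom a a (repl a).i = _
  haveI : IsIso ((W (M := M)).Q.map (repl a).i) := (W (M := M)).Q_inverts _ (repl a).hiw
  haveI : IsIso ((W (M := M)).Q.map (repl a).p) := (W (M := M)).Q_inverts _ (repl a).hpw
  simp [recHom]

lemma recD_Qmap {a b : M} (f : a ⟶ b) :
    recD ((FD (M := M)).map f) = (W (M := M)).Q.map f := by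
  show recHom a b (flift f ≫ (repl b).i) = _
  haveI : IsIso ((W (M := M)).Q.map (repl b).i) := (W (M := M)).Q_inverts _ (repl b).hiw
  haveI : IsIso ((W (M := M)).Q.map (repl a).p) := (W (M := M)).Q_inverts _ (repl a).hpw
  unfold recHom
  rw [CategoryTheory.Functor.map_comp, Category.assoc, IsIso.hom_inv_id_assoc,
    ← CategoryTheory.Functor.map_comp, flift_spec,
    CategoryTheory.Functor.map_comp, IsIso.inv_hom_id_assoc]

/-- the reconstruction property, as a morphism property on the localization -/
def PP : MorphismProperty (W (M := M)).Localization :=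
  fun _ _ φ => recD ((LD (M := M)).map φ) = φ

instance : (PP (M := M)).IsStableUnderComposition := by
  constructor
  intro A B C f g hf hg
  show recD ((LD (M := M)).map (f ≫ g)) = f ≫ g
  rw [CategoryTheory.Functor.map_comp]; erw [recD_comp]
  rw [show recD ((LD (M := M)).map f) = f from hf, show recD ((LD (M := M)).map g) = g from hg]; rfl

lemma PP_Q {a b : M} (f : a ⟶ b) : PP (M := M) ((W (M := M)).Q.map f) := by
  show recD ((LD (M := M)).map ((W (M := M)).Q.map f)) = (W (M := M)).Q.map f
  erw [LD_Q, recD_Qmap]; rfl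

lemma PP_top : ∀ {A B : (W (M := M)).Localization} (φ : A ⟶ B), PP (M := M) φ := by
  intro A B φ
  have htop := Localization.Construction.morphismProperty_eq_top (PP (M := M))
    (fun _ _ f => PP_Q f) ?_
  · rw [htop]; trivial
  · intro X Y w hw
    have h1 : PP (M := M) ((W (M := M)).Q.map w) := PP_Q w
    have hcomp1 : (W (M := M)).Q.map w ≫ wInv w hw = 𝟙 _ := (wIso w hw).hom_inv_id
    have hcomp2 : wInv w hw ≫ (W (M := M)).Q.map w = 𝟙 _ := (wIso w hw).inv_hom_id
    have key : recD ((LD (M := M)).map (wInv w hw)) ≫ (W (M := M)).Q.map w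
        = 𝟙 ((W (M := M)).Q.obj Y) := by
      conv_lhs => erw [← h1]
      erw [← recD_comp, ← CategoryTheory.Functor.map_comp, hcomp2,
        CategoryTheory.Functor.map_id]
      exact recD_id _
    haveI : IsIso ((W (M := M)).Q.map w) := (W (M := M)).Q_inverts _ hw
    show recD ((LD (M := M)).map (wInv w hw)) = wInv w hw
    exact (cancel_mono ((W (M := M)).Q.map w)).1 (key.trans hcomp2.symm)

end Loc

end FTMC

open FTMC in
/-- the classical fundamental theorem of model categories.  For `x` cofibrant
and `y` fibrant, left homotopy (via any cylinder object) and right homotopy (via any path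
object) of maps `x ⟶ y` coincide, and the canonical map from homotopy classes of maps to
morphisms `x ⟶ y` in the homotopy category `Ho(M) = M[W⁻¹]` is a bijection: the functor
`M ⥤ Ho(M)` is surjective on these hom-sets, and identifies two maps iff they are homotopic. -/
theorem fundamental_theorem_of_model_categories
    {M : Type u} [Category.{v} M] [HasFiniteLimits M] [HasFiniteColimits M] [ModelCategory M]
    (x y : M) (hx : Cofibrant x) (hy : Fibrant y)
    (Cl : M) (j : x ⨿ x ⟶ Cl) (q : Cl ⟶ x)
    (hj : Cof (M := M) j) (hq : W (M := M) q) (hfold : j ≫ q = coprod.desc (𝟙 x) (𝟙 x))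
    (Pa : M) (s : y ⟶ Pa) (pr : Pa ⟶ y ⨯ y)
    (hs : W (M := M) s) (hpr : Fib (M := M) pr) (hdiag : s ≫ pr = prod.lift (𝟙 y) (𝟙 y)) :
    (∀ f g : x ⟶ y, LeftHomotopic j f g ↔ RightHomotopic pr f g) ∧
    Function.Surjective (fun f : x ⟶ y => (W (M := M)).Q.map f) ∧
    (∀ f g : x ⟶ y, (W (M := M)).Q.map f = (W (M := M)).Q.map g ↔ LeftHomotopic j f g) := by
  classical
  have hwinlj : W (M := M) (coprod.inl ≫ j) :=
    w_cancel_right _ q hq (by rw [Category.assoc, hfold]; simpa using w_id x)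
  have hcinlj : Cof (M := M) (coprod.inl ≫ j) := cof_comp (cof_inl hx) hj
  have hWfst : W (M := M) (pr ≫ prod.fst) :=
    w_cancel_left s _ hs (by rw [← Category.assoc, hdiag]; simpa using w_id y)
  have hFfst : Fib (M := M) (pr ≫ prod.fst) := fib_comp hpr (fib_fst hy)
  have hL2R : ∀ f g : x ⟶ y, LeftHomotopic j f g → RightHomotopic pr f g := fun f g h =>
    L2R j q hfold s pr hdiag (lift_cof_triv _ _ hcinlj hwinlj hpr) h
  have hR2L : ∀ f g : x ⟶ y, RightHomotopic pr f g → LeftHomotopic j f g := fun f g h =>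
    R2L j q hfold s pr hdiag (lift_triv_fib _ _ hj hFfst hWfst) h
  have hHrelL : ∀ f g : x ⟶ y, HRel f g → LeftHomotopic j f g := fun f g h =>
    hR2L f g (h.toRight hx s pr hpr hdiag)
  obtain ⟨t, ht⟩ := exists_lift_cofibrant hx (repl x).p (repl x).hpf (repl x).hpw (𝟙 x)
  obtain ⟨ey, hey⟩ := exists_extension (repl y).i (repl y).hic (repl y).hiw hy (repl y).p
  haveI : IsIso ((W (M := M)).Q.map (repl x).p) := (W (M := M)).Q_inverts _ (repl x).hpw
  haveI : IsIso ((W (M := M)).Q.map (repl y).i) := (W (M := M)).Q_inverts _ (repl y).hiw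
  refine ⟨fun f g => ⟨hL2R f g, hR2L f g⟩, ?_, ?_⟩
  · -- surjectivity
    intro φ
    obtain ⟨u, hu⟩ := Quot.exists_rep ((LD (M := M)).map φ)
    change (repl x).Qo ⟶ (repl y).R at u
    refine ⟨t ≫ u ≫ ey, ?_⟩
    have hrec : recD ((LD (M := M)).map φ) = φ := PP_top φ
    rw [← hu] at hrec
    have hrec' : recHom x y u = φ := hrec
    have hQt : (W (M := M)).Q.map t = inv ((W (M := M)).Q.map (repl x).p) := by
      have h0 : (W (M := M)).Q.map t ≫ (W (M := M)).Q.map (repl x).p = 𝟙 _ := by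
        rw [← CategoryTheory.Functor.map_comp, ht, CategoryTheory.Functor.map_id]
      calc (W (M := M)).Q.map t
          = (W (M := M)).Q.map t ≫ (W (M := M)).Q.map (repl x).p ≫
            inv ((W (M := M)).Q.map (repl x).p) := by simp
        _ = inv ((W (M := M)).Q.map (repl x).p) := by rw [← Category.assoc, h0]; simp
    have hQe : (W (M := M)).Q.map ey
        = inv ((W (M := M)).Q.map (repl y).i) ≫ (W (M := M)).Q.map (repl y).p := by
      rw [IsIso.eq_inv_comp, ← CategoryTheory.Functor.map_comp, hey]
    show (W (M := M)).Q.map (t ≫ u ≫ ey) = φ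
    rw [CategoryTheory.Functor.map_comp, CategoryTheory.Functor.map_comp, hQt, hQe, ← hrec']
    simp [recHom]
  · intro f g
    constructor
    · intro h
      have hF : (FD (M := M)).map f = (FD (M := M)).map g := by
        rw [← LD_Q f, ← LD_Q g, h]
      have hEq : Equivalence (fun u v : (repl x).Qo ⟶ (repl y).R => HRel u v) :=
        hrel_equiv (repl x).hQ (repl y).hRf
      have hq0 : Quot.mk (fun u v : (repl x).Qo ⟶ (repl y).R => HRel u v)
          (flift f ≫ (repl y).i) = Quot.mk _ (flift g ≫ (repl y).i) := hF
      have hrel0 : HRel (flift f ≫ (repl y).i) (flift g ≫ (repl y).i) :=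
        (hEq.eqvGen_iff).1 (Quot.eq.1 hq0)
      have h3 := hrel0.post ey
      have e1 : (flift f ≫ (repl y).i) ≫ ey = (repl x).p ≫ f := by
        rw [Category.assoc, hey, flift_spec]
      have e2 : (flift g ≫ (repl y).i) ≫ ey = (repl x).p ≫ g := by
        rw [Category.assoc, hey, flift_spec]
      rw [e1, e2] at h3
      have h4 := h3.pre (repl x).hQ hy t
      have e3 : t ≫ (repl x).p ≫ f = f := by rw [← Category.assoc, ht]; simp
      have e4 : t ≫ (repl x).p ≫ g = g := by rw [← Category.assoc, ht]; simp
      rw [e3, e4] at h4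
      exact hHrelL f g h4
    · intro h
      exact Q_map_eq_of_left j q hq hfold h
end

section
/- Let M be a model category. If a morphism f : x → y between bifibrant objects (x, y both cofibrant and fibrant) becomes an isomorphism in the homotopy category Ho(M), then f is a weak equivalence in M. Consequently, the weak equivalences of M are exactly the maps inverted by the localization functor M → Ho(M) (M is saturated). -/
open CategoryTheory CategoryTheory.Limits

universe v u

open ModelCategory

namespace MCSat

attribute [local simp] coprod.inl_desc coprod.inr_desc coprod.inl_desc_assoc coprod.inr_desc_assoc
  prod.lift_fst prod.lift_snd prod.lift_fst_assoc prod.lift_snd_assoc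
  pullback.lift_fst pullback.lift_snd pullback.lift_fst_assoc pullback.lift_snd_assoc

variable {M : Type u} [Category.{v} M] [HasFiniteLimits M] [HasFiniteColimits M] [ModelCategory M]

lemma w_iso {x y : M} (f : x ⟶ y) [IsIso f] : W f := by
  refine w_retract f (𝟙 x) (𝟙 x) (𝟙 x) (inv f) f (by simp) (by simp) (by simp) (by simp)
    (w_id x)

lemma fib_of_rlp {x y : M} (p : x ⟶ y)
    (h : ∀ {a b : M} (i : a ⟶ b), Cof i → W i → HasLiftingProperty i p) : Fib p := by
  obtain ⟨z, j, q, hj, hjw, hq, fac⟩ := factor_cw_f p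
  haveI := h j hj hjw
  have sq : CommSq (𝟙 x) j p q := ⟨by simpa using fac.symm⟩
  exact fib_retract p q j sq.lift (𝟙 y) (𝟙 y) sq.fac_left (by simp)
    (by simpa using fac) (by simpa using sq.fac_right) hq

lemma trivFib_of_rlp {x y : M} (p : x ⟶ y)
    (h : ∀ {a b : M} (i : a ⟶ b), Cof i → HasLiftingProperty i p) : Fib p ∧ W p := by
  obtain ⟨z, j, q, hj, hq, hqw, fac⟩ := factor_c_wf p
  haveI := h j hj
  have sq : CommSq (𝟙 x) j p q := ⟨by simpa using fac.symm⟩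
  refine ⟨fib_retract p q j sq.lift (𝟙 y) (𝟙 y) sq.fac_left (by simp)
    (by simpa using fac) (by simpa using sq.fac_right) hq,
    w_retract p q j sq.lift (𝟙 y) (𝟙 y) sq.fac_left (by simp)
    (by simpa using fac) (by simpa using sq.fac_right) hqw⟩

lemma cof_of_llp {a b : M} (i : a ⟶ b)
    (h : ∀ {x y : M} (p : x ⟶ y), Fib p → W p → HasLiftingProperty i p) : Cof i := by
  obtain ⟨z, j, q, hj, hq, hqw, fac⟩ := factor_c_wf i
  haveI := h q hq hqw
  have sq : CommSq j i q (𝟙 b) := ⟨by simpa using fac⟩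
  exact cof_retract i j (𝟙 a) (𝟙 a) sq.lift q (by simp) sq.fac_right
    (by simpa using sq.fac_left.symm) (by simpa using fac.symm) hj

lemma trivCof_of_llp {a b : M} (i : a ⟶ b)
    (h : ∀ {x y : M} (p : x ⟶ y), Fib p → HasLiftingProperty i p) : Cof i ∧ W i := by
  obtain ⟨z, j, q, hj, hjw, hq, fac⟩ := factor_cw_f i
  haveI := h q hq
  have sq : CommSq j i q (𝟙 b) := ⟨by simpa using fac⟩
  refine ⟨cof_retract i j (𝟙 a) (𝟙 a) sq.lift q (by simp) sq.fac_right
    (by simpa using sq.fac_left.symm) (by simpa using fac.symm) hj,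
    w_retract i j (𝟙 a) (𝟙 a) sq.lift q (by simp) sq.fac_right
    (by simpa using sq.fac_left.symm) (by simpa using fac.symm) hjw⟩

lemma fib_comp {x y z : M} {p : x ⟶ y} {q : y ⟶ z} (hp : Fib p) (hq : Fib q) :
    Fib (p ≫ q) :=
  fib_of_rlp _ fun i hc hw => by
    haveI := lift_cof_triv i p hc hw hp
    haveI := lift_cof_triv i q hc hw hq
    infer_instance

lemma cof_comp {a b c : M} {i : a ⟶ b} {j : b ⟶ c} (hi : Cof i) (hj : Cof j) :
    Cof (i ≫ j) :=
  cof_of_llp _ fun p hf hw => by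
    haveI := lift_triv_fib i p hi hf hw
    haveI := lift_triv_fib j p hj hf hw
    infer_instance

lemma cof_of_iso {a b : M} (e : a ⟶ b) [IsIso e] : Cof e :=
  cof_of_llp _ fun p hf hw => inferInstance

lemma fib_of_iso {a b : M} (e : a ⟶ b) [IsIso e] : Fib e :=
  fib_of_rlp _ fun i hc hw => inferInstance

lemma cof_iso_comp {a b c : M} (e : a ⟶ b) [IsIso e] {i : b ⟶ c} (hi : Cof i) :
    Cof (e ≫ i) :=
  cof_comp (cof_of_iso e) hi

lemma cof_inl {x y : M} (hy : Cofibrant y) : Cof (coprod.inl : x ⟶ x ⨿ y) :=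
  cof_of_llp _ fun p hf hw => by
    haveI := lift_triv_fib (initial.to y) p hy hf hw
    constructor
    intro f g sq
    have sq2 : CommSq (initial.to _) (initial.to y) p (coprod.inr ≫ g) :=
      ⟨initial.hom_ext _ _⟩
    exact ⟨⟨⟨coprod.desc f sq2.lift, by simp, coprod.hom_ext
      (by simpa using sq.w) (by simpa using sq2.fac_right)⟩⟩⟩

lemma cof_inr {x y : M} (hx : Cofibrant x) : Cof (coprod.inr : y ⟶ x ⨿ y) :=
  cof_of_llp _ fun p hf hw => by
    haveI := lift_triv_fib (initial.to x) p hx hf hw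
    constructor
    intro f g sq
    have sq2 : CommSq (initial.to _) (initial.to x) p (coprod.inl ≫ g) :=
      ⟨initial.hom_ext _ _⟩
    exact ⟨⟨⟨coprod.desc sq2.lift f, by simp, coprod.hom_ext
      (by simpa using sq2.fac_right) (by simpa using sq.w)⟩⟩⟩

lemma fib_fst {x y : M} (hy : Fibrant y) : Fib (prod.fst : x ⨯ y ⟶ x) :=
  fib_of_rlp _ fun i hc hw => by
    haveI := lift_cof_triv i (terminal.from y) hc hw hy
    constructor
    intro f g sq
    have sq2 : CommSq (f ≫ prod.snd) i (terminal.from y) (terminal.from _) :=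
      ⟨terminal.hom_ext _ _⟩
    exact ⟨⟨⟨prod.lift g sq2.lift, prod.hom_ext (by simpa using sq.w.symm)
      (by simpa using sq2.fac_left), by simp⟩⟩⟩

lemma fib_snd {x y : M} (hx : Fibrant x) : Fib (prod.snd : x ⨯ y ⟶ y) :=
  fib_of_rlp _ fun i hc hw => by
    haveI := lift_cof_triv i (terminal.from x) hc hw hx
    constructor
    intro f g sq
    have sq2 : CommSq (f ≫ prod.fst) i (terminal.from x) (terminal.from _) :=
      ⟨terminal.hom_ext _ _⟩
    exact ⟨⟨⟨prod.lift sq2.lift g, prod.hom_ext (by simpa using sq2.fac_left)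
      (by simpa using sq.w.symm), by simp⟩⟩⟩

/-- A good cylinder object. -/
structure Cyl (x : M) where
  C : M
  ι : x ⨿ x ⟶ C
  π : C ⟶ x
  cof : Cof ι
  wπ : W π
  fac : ι ≫ π = coprod.desc (𝟙 x) (𝟙 x)

namespace Cyl

variable {x : M} (c : Cyl x)

/-- The first end inclusion. -/
noncomputable def i₀ : x ⟶ c.C := coprod.inl ≫ c.ι

/-- The second end inclusion. -/
noncomputable def i₁ : x ⟶ c.C := coprod.inr ≫ c.ι

lemma inl_ι : coprod.inl ≫ c.ι = c.i₀ := rfl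

lemma inr_ι : coprod.inr ≫ c.ι = c.i₁ := rfl

@[simp] lemma i₀_π : c.i₀ ≫ c.π = 𝟙 x := by simp [i₀, c.fac]

@[simp] lemma i₁_π : c.i₁ ≫ c.π = 𝟙 x := by simp [i₁, c.fac]

lemma w_i₀ : W c.i₀ :=
  w_cancel_right c.i₀ c.π c.wπ (by rw [c.i₀_π]; exact w_id x)

lemma w_i₁ : W c.i₁ :=
  w_cancel_right c.i₁ c.π c.wπ (by rw [c.i₁_π]; exact w_id x)

lemma cof_i₀ (hx : Cofibrant x) : Cof c.i₀ := cof_comp (cof_inl hx) c.cof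

lemma cof_i₁ (hx : Cofibrant x) : Cof c.i₁ := cof_comp (cof_inr hx) c.cof

end Cyl

lemma cyl_exists (x : M) : Nonempty (Cyl x) := by
  obtain ⟨C, i, p, hi, hp, hw, fac⟩ := factor_c_wf (coprod.desc (𝟙 x) (𝟙 x))
  exact ⟨⟨C, i, p, hi, hw, fac⟩⟩

/-- A good path object. -/
structure PathObj (y : M) where
  P : M
  w : y ⟶ P
  q : P ⟶ y ⨯ y
  cofw : Cof w
  ww : W w
  fibq : Fib q
  fac : w ≫ q = prod.lift (𝟙 y) (𝟙 y)

namespace PathObj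

variable {y : M} (P : PathObj y)

/-- The first evaluation. -/
noncomputable def p₀ : P.P ⟶ y := P.q ≫ prod.fst

/-- The second evaluation. -/
noncomputable def p₁ : P.P ⟶ y := P.q ≫ prod.snd

@[simp] lemma w_p₀' : P.w ≫ P.p₀ = 𝟙 y := by simp [p₀, reassoc_of% P.fac]

@[simp] lemma w_p₁' : P.w ≫ P.p₁ = 𝟙 y := by simp [p₁, reassoc_of% P.fac]

lemma w_p₀ : W P.p₀ :=
  w_cancel_left P.w P.p₀ P.ww (by rw [P.w_p₀']; exact w_id y)

lemma w_p₁ : W P.p₁ :=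
  w_cancel_left P.w P.p₁ P.ww (by rw [P.w_p₁']; exact w_id y)

lemma fib_p₀ (hy : Fibrant y) : Fib P.p₀ := fib_comp P.fibq (fib_fst hy)

lemma fib_p₁ (hy : Fibrant y) : Fib P.p₁ := fib_comp P.fibq (fib_snd hy)

end PathObj

lemma pathObj_exists (y : M) : Nonempty (PathObj y) := by
  obtain ⟨P, w, q, hw, hww, hq, fac⟩ := factor_cw_f (prod.lift (𝟙 y) (𝟙 y))
  exact ⟨⟨P, w, q, hw, hww, hq, fac⟩⟩

/-- Left homotopy through a good cylinder. -/
def LH {x y : M} (f g : x ⟶ y) : Prop :=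
  ∃ (c : Cyl x) (H : c.C ⟶ y), c.i₀ ≫ H = f ∧ c.i₁ ≫ H = g

/-- Right homotopy through a good path object. -/
def RH {x y : M} (f g : x ⟶ y) : Prop :=
  ∃ (P : PathObj y) (K : x ⟶ P.P), K ≫ P.q = prod.lift f g

/-- Two maps with equal composites to the base of a trivial fibration are left homotopic. -/
lemma lh_of_eq_comp_trivFib {b u v : M} {p : u ⟶ v} (hf : Fib p) (hw : W p)
    {l₀ l₁ : b ⟶ u} (h : l₀ ≫ p = l₁ ≫ p) : LH l₀ l₁ := by
  obtain ⟨c⟩ := cyl_exists (M := M) b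
  haveI := lift_triv_fib c.ι p c.cof hf hw
  have sq : CommSq (coprod.desc l₀ l₁) c.ι p (c.π ≫ l₀ ≫ p) :=
    ⟨by rw [reassoc_of% c.fac]; apply coprod.hom_ext <;> simp [h]⟩
  exact ⟨c, sq.lift, by simp [Cyl.i₀, Category.assoc, sq.fac_left],
    by simp [Cyl.i₁, Category.assoc, sq.fac_left]⟩

/-- Two maps with equal precomposition with a trivial cofibration are right homotopic. -/
lemma rh_of_trivCof_eq {a b z : M} {i : a ⟶ b} (hc : Cof i) (hw : W i)
    {l₀ l₁ : b ⟶ z} (h : i ≫ l₀ = i ≫ l₁) : RH l₀ l₁ := by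
  obtain ⟨P⟩ := pathObj_exists (M := M) z
  haveI := lift_cof_triv i P.q hc hw P.fibq
  have sq : CommSq (i ≫ l₀ ≫ P.w) i P.q (prod.lift l₀ l₁) :=
    ⟨by rw [Category.assoc, Category.assoc, P.fac]; apply Limits.prod.hom_ext <;> simp [h]⟩
  exact ⟨P, sq.lift, sq.fac_right⟩

lemma rh_of_lh {x y : M} (hx : Cofibrant x) {f g : x ⟶ y} (h : LH f g) : RH f g := by
  obtain ⟨c, H, h0, h1⟩ := h
  obtain ⟨P⟩ := pathObj_exists (M := M) y
  haveI := lift_cof_triv c.i₀ P.q (c.cof_i₀ hx) c.w_i₀ P.fibq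
  have sq : CommSq (f ≫ P.w) c.i₀ P.q (prod.lift (c.π ≫ f) H) :=
    ⟨by rw [Category.assoc, P.fac]; apply Limits.prod.hom_ext <;>
      simp [reassoc_of% c.i₀_π, h0]⟩
  refine ⟨P, c.i₁ ≫ sq.lift, ?_⟩
  rw [Category.assoc, sq.fac_right]
  apply Limits.prod.hom_ext <;> simp [reassoc_of% c.i₁_π, h1]

lemma lh_of_rh {x y : M} (hy : Fibrant y) {f g : x ⟶ y} (h : RH f g) : LH f g := by
  obtain ⟨P, K, hK⟩ := h
  obtain ⟨c⟩ := cyl_exists (M := M) x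
  haveI := lift_triv_fib c.ι P.p₀ c.cof (P.fib_p₀ hy) P.w_p₀
  have sq : CommSq (coprod.desc (f ≫ P.w) K) c.ι P.p₀ (c.π ≫ f) :=
    ⟨by rw [reassoc_of% c.fac]; apply coprod.hom_ext <;>
      simp [PathObj.p₀, Category.assoc, reassoc_of% hK, reassoc_of% P.fac]⟩
  refine ⟨c, sq.lift ≫ P.p₁, ?_, ?_⟩
  · rw [Cyl.i₀, Category.assoc, reassoc_of% sq.fac_left]
    simp [PathObj.p₁, reassoc_of% P.fac]
  · rw [Cyl.i₁, Category.assoc, reassoc_of% sq.fac_left]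
    simp [PathObj.p₁, reassoc_of% hK]

lemma lh_refl {x y : M} (f : x ⟶ y) : LH f f := by
  obtain ⟨c⟩ := cyl_exists (M := M) x
  exact ⟨c, c.π ≫ f, by rw [reassoc_of% c.i₀_π], by rw [reassoc_of% c.i₁_π]⟩

lemma lh_symm {x y : M} {f g : x ⟶ y} (h : LH f g) : LH g f := by
  obtain ⟨c, H, h0, h1⟩ := h
  refine ⟨⟨c.C, (coprod.braiding x x).hom ≫ c.ι, c.π, cof_iso_comp _ c.cof, c.wπ, ?_⟩, H, ?_, ?_⟩
  · rw [Category.assoc, c.fac]; apply coprod.hom_ext <;> simp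
  · simpa [Cyl.i₀, Cyl.i₁] using h1
  · simpa [Cyl.i₀, Cyl.i₁] using h0

lemma lh_trans {x y : M} (hx : Cofibrant x) (hy : Fibrant y) {f g h : x ⟶ y}
    (h1 : LH f g) (h2 : LH g h) : LH f h := by
  obtain ⟨P, K, hK⟩ := rh_of_lh hx h1
  obtain ⟨c, H', e0, e1⟩ := h2
  haveI := lift_cof_triv c.i₀ P.q (c.cof_i₀ hx) c.w_i₀ P.fibq
  have sq : CommSq K c.i₀ P.q (prod.lift (c.π ≫ f) H') :=
    ⟨by rw [hK]; apply Limits.prod.hom_ext <;> simp [reassoc_of% c.i₀_π, e0]⟩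
  apply lh_of_rh hy
  refine ⟨P, c.i₁ ≫ sq.lift, ?_⟩
  rw [Category.assoc, sq.fac_right]
  apply Limits.prod.hom_ext <;> simp [reassoc_of% c.i₁_π, e1]

lemma lh_postcomp {x y z : M} {f g : x ⟶ y} (e : y ⟶ z) (h : LH f g) :
    LH (f ≫ e) (g ≫ e) := by
  obtain ⟨c, H, h0, h1⟩ := h
  exact ⟨c, H ≫ e, by rw [← Category.assoc, h0], by rw [← Category.assoc, h1]⟩

lemma lh_precomp {a x y : M} (hx : Cofibrant x) (hy : Fibrant y) {f g : x ⟶ y}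
    (e : a ⟶ x) (h : LH f g) : LH (e ≫ f) (e ≫ g) := by
  obtain ⟨P, K, hK⟩ := rh_of_lh hx h
  exact lh_of_rh hy ⟨P, e ≫ K, by rw [Category.assoc, hK, prod.comp_lift]⟩

/-- Dividing a left homotopy by a trivial cofibration. -/
lemma lh_of_comp_trivCof {a b z : M} {j : a ⟶ b} (hc : Cof j) (hw : W j)
    (ha : Cofibrant a) (hz : Fibrant z) {α β : b ⟶ z}
    (h : LH (j ≫ α) (j ≫ β)) : LH α β := by
  obtain ⟨P, K, hK⟩ := rh_of_lh ha h
  haveI := lift_cof_triv j P.q hc hw P.fibq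
  have sq : CommSq K j P.q (prod.lift α β) :=
    ⟨by rw [hK]; apply Limits.prod.hom_ext <;> simp⟩
  exact lh_of_rh hz ⟨P, sq.lift, sq.fac_right⟩
lemma trivFib_pullback_snd {u v w : M} (f : u ⟶ w) (g : v ⟶ w) (hf : Fib f) (hw : W f) :
    Fib (pullback.snd f g) ∧ W (pullback.snd f g) := by
  apply trivFib_of_rlp
  intro a b i hi
  haveI := lift_triv_fib i f hi hf hw
  constructor
  intro A B sq
  have sq2 : CommSq (A ≫ pullback.fst f g) i f (B ≫ g) :=
    ⟨by rw [Category.assoc, pullback.condition, ← Category.assoc, sq.w, Category.assoc]⟩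
  refine ⟨⟨⟨pullback.lift sq2.lift B sq2.fac_right, ?_, by simp⟩⟩⟩
  apply pullback.hom_ext
  · simpa using sq2.fac_left
  · simpa using sq.w.symm

lemma fib_pullback_fst {u v w : M} (f : u ⟶ w) (g : v ⟶ w) (hg : Fib g) :
    Fib (pullback.fst f g) := by
  apply fib_of_rlp
  intro a b i hi hiw
  haveI := lift_cof_triv i g hi hiw hg
  constructor
  intro A B sq
  have sq2 : CommSq (A ≫ pullback.snd f g) i g (B ≫ f) :=
    ⟨by rw [Category.assoc, ← pullback.condition, ← Category.assoc, sq.w, Category.assoc]⟩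
  refine ⟨⟨⟨pullback.lift B sq2.lift sq2.fac_right.symm, ?_, by simp⟩⟩⟩
  apply pullback.hom_ext
  · simpa using sq.w.symm
  · simpa using sq2.fac_left

/-- Homotopy equivalence. -/
def HEquiv {x y : M} (f : x ⟶ y) : Prop :=
  ∃ g : y ⟶ x, LH (f ≫ g) (𝟙 x) ∧ LH (g ≫ f) (𝟙 y)

lemma hequiv_of_trivCof {x z : M} {i : x ⟶ z} (hc : Cof i) (hw : W i)
    (hx : Fibrant x) (hz : Fibrant z) : HEquiv i := by
  haveI := lift_cof_triv i (terminal.from x) hc hw hx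
  have sq : CommSq (𝟙 x) i (terminal.from x) (terminal.from z) := ⟨terminal.hom_ext _ _⟩
  refine ⟨sq.lift, by rw [sq.fac_left]; exact lh_refl _, ?_⟩
  refine lh_of_rh hz (rh_of_trivCof_eq hc hw ?_)
  rw [← Category.assoc, sq.fac_left, Category.id_comp, Category.comp_id]

lemma hequiv_of_trivFib {z y : M} {p : z ⟶ y} (hf : Fib p) (hw : W p)
    (hy : Cofibrant y) : HEquiv p := by
  haveI := lift_triv_fib (initial.to y) p hy hf hw
  have sq : CommSq (initial.to z) (initial.to y) p (𝟙 y) := ⟨initial.hom_ext _ _⟩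
  refine ⟨sq.lift, ?_, by rw [sq.fac_right]; exact lh_refl _⟩
  apply lh_of_eq_comp_trivFib hf hw
  rw [Category.assoc, sq.fac_right, Category.id_comp, Category.comp_id]

lemma hequiv_comp {x y z : M} {f : x ⟶ y} {g : y ⟶ z}
    (hxc : Cofibrant x) (hxf : Fibrant x) (hyc : Cofibrant y) (hyf : Fibrant y)
    (hzc : Cofibrant z) (hzf : Fibrant z)
    (hf : HEquiv f) (hg : HEquiv g) : HEquiv (f ≫ g) := by
  obtain ⟨f', hf1, hf2⟩ := hf
  obtain ⟨g', hg1, hg2⟩ := hg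
  refine ⟨g' ≫ f', ?_, ?_⟩
  · have l1 : LH (f ≫ (g ≫ g') ≫ f') (f ≫ 𝟙 y ≫ f') :=
      lh_precomp hyc hxf f (lh_postcomp f' hg1)
    have l2 : LH (f ≫ 𝟙 y ≫ f') (𝟙 x) := by simpa using hf1
    have := lh_trans hxc hxf l1 l2
    simpa using this
  · have l1 : LH (g' ≫ (f' ≫ f) ≫ g) (g' ≫ 𝟙 y ≫ g) :=
      lh_precomp hyc hzf g' (lh_postcomp g hf2)
    have l2 : LH (g' ≫ 𝟙 y ≫ g) (𝟙 z) := by simpa using hg2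
    have := lh_trans hzc hzf l1 l2
    simpa using this

lemma cofibrant_of_cof {x z : M} (hx : Cofibrant x) {i : x ⟶ z} (hi : Cof i) :
    Cofibrant z := by
  have : initial.to z = initial.to x ≫ i := initial.hom_ext _ _
  rw [Cofibrant, this]
  exact cof_comp hx hi

lemma fibrant_of_fib {z y : M} (hy : Fibrant y) {p : z ⟶ y} (hp : Fib p) :
    Fibrant z := by
  have : terminal.from z = p ≫ terminal.from y := terminal.hom_ext _ _
  rw [Fibrant, this]
  exact fib_comp hp hy

/-- Easy Whitehead: a weak equivalence between bifibrant objects is a homotopy equivalence. -/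
lemma hequiv_of_w {x y : M} {f : x ⟶ y}
    (hxc : Cofibrant x) (hxf : Fibrant x) (hyc : Cofibrant y) (hyf : Fibrant y)
    (hf : W f) : HEquiv f := by
  obtain ⟨z, i, p, hic, hiw, hpf, fac⟩ := factor_cw_f f
  have hpw : W p := w_cancel_left i p hiw (by rw [fac]; exact hf)
  have hzc : Cofibrant z := cofibrant_of_cof hxc hic
  have hzf : Fibrant z := fibrant_of_fib hyf hpf
  rw [← fac]
  exact hequiv_comp hxc hxf hzc hzf hyc hyf
    (hequiv_of_trivCof hic hiw hxf hzf) (hequiv_of_trivFib hpf hpw hyc)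
/-- Hard Whitehead step: a fibration between bifibrant objects that is a homotopy
equivalence is a weak equivalence. -/
lemma w_of_fib_hequiv {z y : M} {p : z ⟶ y}
    (hzc : Cofibrant z) (hzf : Fibrant z) (hyc : Cofibrant y) (hyf : Fibrant y)
    (hp : Fib p) (he : HEquiv p) : W p := by
  obtain ⟨q', hq1, hq2⟩ := he
  -- Step 1: produce a strict section `s` of `p` with `LH (p ≫ s) (𝟙 z)`.
  obtain ⟨cy, H, h0, h1⟩ := hq2
  haveI := lift_cof_triv cy.i₀ p (cy.cof_i₀ hyc) cy.w_i₀ hp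
  have sq1 : CommSq q' cy.i₀ p H := ⟨h0.symm⟩
  set s : y ⟶ z := cy.i₁ ≫ sq1.lift with hs_def
  have hs : s ≫ p = 𝟙 y := by rw [hs_def, Category.assoc, sq1.fac_right, h1]
  have lhq's : LH q' s := ⟨cy, sq1.lift, sq1.fac_left, rfl⟩
  have hps : LH (p ≫ s) (𝟙 z) := by
    have l1 : LH (p ≫ q') (p ≫ s) := lh_precomp hyc hzf p lhq's
    exact lh_trans hzc hzf (lh_symm l1) hq1
  -- Step 2: a cylinder homotopy `G` from `p ≫ s` to `𝟙 z`, and the lift `Mm`.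
  obtain ⟨c, G, g0, g1⟩ := hps
  haveI := lift_cof_triv c.i₁ p (c.cof_i₁ hzc) c.w_i₁ hp
  have sqM : CommSq (𝟙 z) c.i₁ p (G ≫ p) :=
    ⟨by rw [Category.id_comp, ← Category.assoc, g1, Category.id_comp]⟩
  set Mm : c.C ⟶ z := sqM.lift with hMm_def
  have hM1 : c.i₁ ≫ Mm = 𝟙 z := sqM.fac_left
  have hMp : Mm ≫ p = G ≫ p := sqM.fac_right
  set t : z ⟶ z := c.i₀ ≫ Mm with ht_def
  have htp : t ≫ p = p := by
    rw [ht_def, Category.assoc, hMp, ← Category.assoc, g0, Category.assoc, hs,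
      Category.comp_id]
  have hWM : W Mm := w_cancel_left c.i₁ Mm c.w_i₁ (by rw [hM1]; exact w_id z)
  have hWt : W t := w_comp _ _ c.w_i₀ hWM
  -- Step 3: the relative path object gadget.
  obtain ⟨Py⟩ := pathObj_exists (M := M) y
  set dPy : pullback Py.p₀ p ⟶ Py.P := pullback.fst Py.p₀ p with hdPy
  set dz : pullback Py.p₀ p ⟶ z := pullback.snd Py.p₀ p with hdz
  obtain ⟨hdzF, hdzW⟩ := trivFib_pullback_snd Py.p₀ p (Py.fib_p₀ hyf) Py.w_p₀
  set μ : pullback Py.p₀ p ⟶ y := dPy ≫ Py.p₁ with hμ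
  set θ : pullback μ p ⟶ pullback Py.p₀ p := pullback.fst μ p with hθ
  set ez : pullback μ p ⟶ z := pullback.snd μ p with hez
  have hθF : Fib θ := fib_pullback_fst μ p hp
  have w₁ : (p ≫ Py.w) ≫ Py.p₀ = 𝟙 z ≫ p := by
    rw [Category.assoc, Py.w_p₀', Category.comp_id, Category.id_comp]
  set δD : z ⟶ pullback Py.p₀ p := pullback.lift (p ≫ Py.w) (𝟙 z) w₁ with hδD
  have w₂ : δD ≫ μ = 𝟙 z ≫ p := by
    rw [hμ, hδD, ← Category.assoc, pullback.lift_fst, Category.assoc, Py.w_p₁',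
      Category.comp_id, Category.id_comp]
  set δ : z ⟶ pullback μ p := pullback.lift δD (𝟙 z) w₂ with hδ
  obtain ⟨Pz, w', Ψ, hw'c, hw'w, hΨ, facδ⟩ := factor_cw_f δ
  set ev₁ : Pz ⟶ z := Ψ ≫ ez with hev₁
  set Θ : Pz ⟶ pullback Py.p₀ p := Ψ ≫ θ with hΘ
  have hΘF : Fib Θ := fib_comp hΨ hθF
  have hw'Θ : w' ≫ Θ = δD := by
    rw [hΘ, ← Category.assoc, facδ, hδ, pullback.lift_fst]
  have hWδD : W δD := w_cancel_right δD dz hdzW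
    (by rw [hδD, pullback.lift_snd]; exact w_id z)
  have hΘW : W Θ := w_cancel_left w' Θ hw'w (by rw [hw'Θ]; exact hWδD)
  -- Step 4: the `N` lift producing a fibrewise homotopy from `p ≫ s` to `t`.
  haveI := lift_cof_triv c.i₁ Ψ (c.cof_i₁ hzc) c.w_i₁ hΨ
  have w₃ : (G ≫ p ≫ Py.w) ≫ Py.p₀ = G ≫ p := by
    rw [Category.assoc, Category.assoc, Py.w_p₀', Category.comp_id]
  set bD : c.C ⟶ pullback Py.p₀ p := pullback.lift (G ≫ p ≫ Py.w) G w₃ with hbD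
  have w₄ : bD ≫ μ = Mm ≫ p := by
    rw [hμ, hbD, ← Category.assoc, pullback.lift_fst, hMp, Category.assoc,
      Category.assoc, Py.w_p₁', Category.comp_id]
  set bN : c.C ⟶ pullback μ p := pullback.lift bD Mm w₄ with hbN
  have sqN : CommSq w' c.i₁ Ψ bN := by
    constructor
    rw [facδ, hδ]
    apply pullback.hom_ext
    · rw [Category.assoc, hbN, pullback.lift_fst, pullback.lift_fst, hbD, hδD]
      apply pullback.hom_ext
      · rw [Category.assoc, pullback.lift_fst, pullback.lift_fst,
          ← Category.assoc, g1, Category.id_comp]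
      · rw [Category.assoc, pullback.lift_snd, pullback.lift_snd, g1]
    · rw [Category.assoc, hbN, pullback.lift_snd, pullback.lift_snd, hM1]
  set U : z ⟶ Pz := c.i₀ ≫ sqN.lift with hU
  have hNΨ : sqN.lift ≫ Ψ = bN := sqN.fac_right
  have hUev₁ : U ≫ ev₁ = t := by
    rw [hU, hev₁, Category.assoc, ← Category.assoc sqN.lift, hNΨ, hez, hbN,
      pullback.lift_snd, ht_def]
  have hUΘ : U ≫ Θ = c.i₀ ≫ bD := by
    rw [hU, hΘ, Category.assoc, ← Category.assoc sqN.lift, hNΨ, hθ, hbN,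
      pullback.lift_fst]
  -- Step 5: the `T` lift over a cylinder, against the trivial fibration `Θ`.
  haveI := lift_triv_fib c.ι Θ c.cof hΘF hΘW
  have w₅ : (c.π ≫ p ≫ Py.w) ≫ Py.p₀ = (c.π ≫ p ≫ s) ≫ p := by
    rw [Category.assoc, Category.assoc, Py.w_p₀', Category.comp_id,
      Category.assoc, Category.assoc, hs, Category.comp_id]
  set bT : c.C ⟶ pullback Py.p₀ p := pullback.lift (c.π ≫ p ≫ Py.w) (c.π ≫ p ≫ s) w₅
    with hbT
  have sqT : CommSq (coprod.desc (p ≫ s ≫ w') U) c.ι Θ bT := by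
    constructor
    apply coprod.hom_ext <;> apply pullback.hom_ext <;>
      simp [hΘ, hbT, hU, hδD, hδ, hbN, hbD, hθ, hez, pullback.lift_fst, pullback.lift_snd,
        pullback.lift_fst_assoc, pullback.lift_snd_assoc,
        reassoc_of% facδ, reassoc_of% sqN.fac_right, reassoc_of% c.fac,
        reassoc_of% c.i₀_π, reassoc_of% c.i₁_π, reassoc_of% hs,
        reassoc_of% g0, reassoc_of% g1, g0, g1, Py.w_p₀', Py.w_p₁',
        reassoc_of% Py.w_p₀', reassoc_of% Py.w_p₁']
  set U' : c.C ⟶ z := sqT.lift ≫ ev₁ with hU'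
  have e₀ : c.i₀ ≫ U' = p ≫ s := by
    have h1 := reassoc_of% sqT.fac_left
    rw [hU', Cyl.i₀, Category.assoc, h1]
    simp [hev₁, hδ, hez, reassoc_of% facδ, pullback.lift_snd]
  have e₁ : c.i₁ ≫ U' = t := by
    have h1 := reassoc_of% sqT.fac_left
    rw [hU', Cyl.i₁, Category.assoc, h1, ht_def]
    simp only [coprod.inr_desc_assoc]
    rw [hU, hev₁]
    simp [reassoc_of% sqN.fac_right, hbN, pullback.lift_snd, hez]
  have eb : U' ≫ p = c.π ≫ p := by
    have h2 : ez ≫ p = θ ≫ μ := pullback.condition.symm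
    have h3 := reassoc_of% sqT.fac_right
    have h5 : Θ ≫ μ = Ψ ≫ θ ≫ μ := by rw [hΘ, Category.assoc]
    calc U' ≫ p = sqT.lift ≫ Ψ ≫ ez ≫ p := by
          rw [hU', hev₁]; simp only [Category.assoc]
    _ = sqT.lift ≫ Ψ ≫ θ ≫ μ := by rw [h2]
    _ = bT ≫ μ := by rw [← h5, h3]
    _ = c.π ≫ p := by
          rw [hμ, hbT, hdPy]
          simp [pullback.lift_fst_assoc, reassoc_of% Py.w_p₁']
  have hWU' : W U' := w_cancel_left c.i₁ U' c.w_i₁ (by rw [e₁]; exact hWt)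
  exact w_retract p U' c.i₀ c.π s p c.i₀_π hs e₀ eb.symm hWU'
/-- The full subcategory of bifibrant objects. -/
abbrev Bif (M : Type u) [Category.{v} M] [HasFiniteLimits M] [HasFiniteColimits M]
    [ModelCategory M] : Type u :=
  ObjectProperty.FullSubcategory (fun x : M => Cofibrant x ∧ Fibrant x)

/-- The left-homotopy relation on the category of bifibrant objects. -/
def bifRel : HomRel (Bif M) := fun X Y f g => LH (x := X.obj) (y := Y.obj) f.hom g.hom

instance : Congruence (bifRel (M := M)) where
  equivalence := fun {X Y} =>
    ⟨fun f => lh_refl (M := M) f.hom, fun h => lh_symm (M := M) h,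
      fun h1 h2 => lh_trans X.property.1 Y.property.2 h1 h2⟩
  comp_left := fun {X Y Z} f {g g'} h => lh_precomp Y.property.1 Z.property.2 f.hom h
  comp_right := fun {X Y Z} {f f'} g h => lh_postcomp (M := M) g.hom h

/-- A cofibrant replacement. -/
structure CofRep (x : M) where
  obj : M
  p : obj ⟶ x
  cofibrant : Cofibrant obj
  fib : Fib p
  w : W p

lemma cofRep_ex (x : M) : Nonempty (CofRep x) := by
  obtain ⟨z, i, p, hic, hpf, hpw, fac⟩ := factor_c_wf (initial.to x)
  have : initial.to z = i := initial.hom_ext _ _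
  exact ⟨⟨z, p, by rw [Cofibrant, this]; exact hic, hpf, hpw⟩⟩

/-- A chosen cofibrant replacement. -/
noncomputable def cofRep (x : M) : CofRep x := Classical.choice (cofRep_ex x)

/-- A fibrant replacement. -/
structure FibRep (x : M) where
  obj : M
  j : x ⟶ obj
  fibrant : Fibrant obj
  cof : Cof j
  w : W j

lemma fibRep_ex (x : M) : Nonempty (FibRep x) := by
  obtain ⟨z, i, p, hic, hiw, hpf, fac⟩ := factor_cw_f (terminal.from x)
  have : terminal.from z = p := terminal.hom_ext _ _
  exact ⟨⟨z, i, by rw [Fibrant, this]; exact hpf, hic, hiw⟩⟩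

/-- A chosen fibrant replacement. -/
noncomputable def fibRep (x : M) : FibRep x := Classical.choice (fibRep_ex x)

lemma qmap_ex {x y : M} (f : x ⟶ y) :
    ∃ qf : (cofRep x).obj ⟶ (cofRep y).obj, qf ≫ (cofRep y).p = (cofRep x).p ≫ f := by
  haveI := lift_triv_fib (initial.to (cofRep x).obj) (cofRep y).p (cofRep x).cofibrant
    (cofRep y).fib (cofRep y).w
  have sq : CommSq (initial.to _) (initial.to (cofRep x).obj) (cofRep y).p
      ((cofRep x).p ≫ f) := ⟨initial.hom_ext _ _⟩
  exact ⟨sq.lift, sq.fac_right⟩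

/-- Lift of a morphism to the cofibrant replacements. -/
noncomputable def Qmap {x y : M} (f : x ⟶ y) : (cofRep x).obj ⟶ (cofRep y).obj :=
  (qmap_ex f).choose

lemma Qmap_spec {x y : M} (f : x ⟶ y) :
    Qmap f ≫ (cofRep y).p = (cofRep x).p ≫ f := (qmap_ex f).choose_spec

lemma rmap_ex {a b : M} (g : a ⟶ b) :
    ∃ rg : (fibRep a).obj ⟶ (fibRep b).obj, (fibRep a).j ≫ rg = g ≫ (fibRep b).j := by
  haveI := lift_cof_triv (fibRep a).j (terminal.from (fibRep b).obj) (fibRep a).cof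
    (fibRep a).w (fibRep b).fibrant
  have sq : CommSq (g ≫ (fibRep b).j) (fibRep a).j (terminal.from (fibRep b).obj)
      (terminal.from _) := ⟨terminal.hom_ext _ _⟩
  exact ⟨sq.lift, sq.fac_left⟩

/-- Lift of a morphism to the fibrant replacements. -/
noncomputable def Rmap {a b : M} (g : a ⟶ b) : (fibRep a).obj ⟶ (fibRep b).obj :=
  (rmap_ex g).choose

lemma Rmap_spec {a b : M} (g : a ⟶ b) :
    (fibRep a).j ≫ Rmap g = g ≫ (fibRep b).j := (rmap_ex g).choose_spec

/-- The bifibrant replacement of an object. -/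
noncomputable def bifObj (x : M) : Bif M :=
  ⟨(fibRep (cofRep x).obj).obj,
    cofibrant_of_cof (cofRep x).cofibrant (fibRep (cofRep x).obj).cof,
    (fibRep (cofRep x).obj).fibrant⟩

/-- The bifibrant replacement of a morphism. -/
noncomputable def Fmap {x y : M} (f : x ⟶ y) : (bifObj x).obj ⟶ (bifObj y).obj :=
  Rmap (Qmap f)

lemma rmap_congr {a b : M} (hac : Cofibrant a) {u v : a ⟶ b} (h : LH u v) :
    LH (Rmap u) (Rmap v) := by
  apply lh_of_comp_trivCof (fibRep a).cof (fibRep a).w hac (fibRep b).fibrant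
  rw [Rmap_spec, Rmap_spec]
  exact lh_postcomp _ h

lemma rmap_congr_eq {a b : M} (hac : Cofibrant a) {u : a ⟶ b}
    {v : (fibRep a).obj ⟶ (fibRep b).obj} (h : (fibRep a).j ≫ v = u ≫ (fibRep b).j) :
    LH (Rmap u) v := by
  apply lh_of_comp_trivCof (fibRep a).cof (fibRep a).w hac (fibRep b).fibrant
  rw [Rmap_spec, h]
  exact lh_refl _

lemma fmap_id (x : M) : LH (Fmap (𝟙 x)) (𝟙 (bifObj x).obj) := by
  have h1 : LH (Qmap (𝟙 x)) (𝟙 (cofRep x).obj) := by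
    apply lh_of_eq_comp_trivFib (cofRep x).fib (cofRep x).w
    rw [Qmap_spec]; simp
  have h2 : LH (Rmap (Qmap (𝟙 x))) (Rmap (𝟙 (cofRep x).obj)) :=
    rmap_congr (cofRep x).cofibrant h1
  have h3 : LH (Rmap (𝟙 (cofRep x).obj)) (𝟙 (fibRep (cofRep x).obj).obj) :=
    rmap_congr_eq (cofRep x).cofibrant (by simp)
  exact lh_trans (bifObj x).property.1 (bifObj x).property.2 h2 h3

lemma fmap_comp {x y z : M} (f : x ⟶ y) (g : y ⟶ z) :
    LH (Fmap (f ≫ g)) (Fmap f ≫ Fmap g) := by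
  have h1 : LH (Qmap (f ≫ g)) (Qmap f ≫ Qmap g) := by
    apply lh_of_eq_comp_trivFib (cofRep z).fib (cofRep z).w
    rw [Qmap_spec, Category.assoc, Qmap_spec, reassoc_of% (Qmap_spec f)]
  have h2 : LH (Rmap (Qmap (f ≫ g))) (Rmap (Qmap f ≫ Qmap g)) :=
    rmap_congr (cofRep x).cofibrant h1
  have h3 : LH (Rmap (Qmap f ≫ Qmap g)) (Rmap (Qmap f) ≫ Rmap (Qmap g)) := by
    apply rmap_congr_eq (cofRep x).cofibrant
    rw [← Category.assoc, Rmap_spec, Category.assoc, Rmap_spec, ← Category.assoc]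
  exact lh_trans (bifObj x).property.1 (bifObj z).property.2 h2 h3

/-- The bifibrant replacement functor into the homotopy category of bifibrant objects. -/
noncomputable def Floc : M ⥤ CategoryTheory.Quotient (bifRel (M := M)) where
  obj x := ⟨bifObj x⟩
  map {x y} f := (Quotient.functor (bifRel (M := M))).map (X := bifObj x) (Y := bifObj y)
    (ObjectProperty.homMk (Fmap f))
  map_id x := by
    exact (CategoryTheory.Quotient.sound (bifRel (M := M)) (a := bifObj x) (b := bifObj x)
      (f₁ := ObjectProperty.homMk (Fmap (𝟙 x))) (f₂ := 𝟙 (bifObj x)) (fmap_id x)).trans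
      ((Quotient.functor (bifRel (M := M))).map_id _)
  map_comp {x y z} f g := by
    exact (CategoryTheory.Quotient.sound (bifRel (M := M)) (a := bifObj x) (b := bifObj z)
      (f₁ := ObjectProperty.homMk (Fmap (f ≫ g)))
        (f₂ := ObjectProperty.homMk (Fmap f) ≫ ObjectProperty.homMk (Fmap g))
      (fmap_comp f g)).trans
      ((Quotient.functor (bifRel (M := M))).map_comp (X := bifObj x) (Y := bifObj y)
        (Z := bifObj z) (ObjectProperty.homMk (Fmap f)) (ObjectProperty.homMk (Fmap g)))

lemma hequiv_iff_quotient_iso {a b : Bif M} (f : a ⟶ b) :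
    HEquiv (M := M) (x := a.obj) (y := b.obj) f.hom ↔
      IsIso ((Quotient.functor (bifRel (M := M))).map f) := by
  constructor
  · rintro ⟨g, h1, h2⟩
    refine ⟨(Quotient.functor (bifRel (M := M))).map (X := b) (Y := a) (ObjectProperty.homMk g), ?_, ?_⟩
    · exact (((Quotient.functor (bifRel (M := M))).map_comp (X := a) (Y := b) (Z := a)
        f (ObjectProperty.homMk g)).symm.trans
        (CategoryTheory.Quotient.sound (bifRel (M := M)) (a := a) (b := a)
          (f₁ := f ≫ ObjectProperty.homMk g) (f₂ := 𝟙 a) h1)).trans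
        ((Quotient.functor (bifRel (M := M))).map_id _)
    · exact (((Quotient.functor (bifRel (M := M))).map_comp (X := b) (Y := a) (Z := b)
        (ObjectProperty.homMk g) f).symm.trans
        (CategoryTheory.Quotient.sound (bifRel (M := M)) (a := b) (b := b)
          (f₁ := ObjectProperty.homMk g ≫ f) (f₂ := 𝟙 b) h2)).trans
        ((Quotient.functor (bifRel (M := M))).map_id _)
  · intro hiso
    obtain ⟨g, hg⟩ := (Quotient.functor (bifRel (M := M))).map_surjective
      (inv ((Quotient.functor (bifRel (M := M))).map f))
    refine ⟨g.hom, ?_, ?_⟩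
    · have : (Quotient.functor (bifRel (M := M))).map (f ≫ g) =
        (Quotient.functor (bifRel (M := M))).map (𝟙 a) := by
        rw [Functor.map_comp, hg]
        exact (IsIso.hom_inv_id _).trans
          ((Quotient.functor (bifRel (M := M))).map_id _).symm
      exact (Quotient.functor_map_eq_iff (bifRel (M := M)) _ _).1 this
    · have : (Quotient.functor (bifRel (M := M))).map (g ≫ f) =
        (Quotient.functor (bifRel (M := M))).map (𝟙 b) := by
        rw [Functor.map_comp, hg]
        exact (IsIso.inv_hom_id _).trans
          ((Quotient.functor (bifRel (M := M))).map_id _).symm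
      exact (Quotient.functor_map_eq_iff (bifRel (M := M)) _ _).1 this

/-- Whitehead: a homotopy equivalence between bifibrant objects is a weak equivalence. -/
lemma w_of_hequiv {x y : M}
    (hxc : Cofibrant x) (hxf : Fibrant x) (hyc : Cofibrant y) (hyf : Fibrant y)
    {f : x ⟶ y} (he : HEquiv f) : W f := by
  obtain ⟨z, i, p, hic, hiw, hpf, fac⟩ := factor_cw_f f
  have hzc : Cofibrant z := cofibrant_of_cof hxc hic
  have hzf : Fibrant z := fibrant_of_fib hyf hpf
  have hei : HEquiv i := hequiv_of_trivCof hic hiw hxf hzf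
  -- transfer to the quotient category to get that `p` is a homotopy equivalence
  set A : Bif M := ⟨x, hxc, hxf⟩
  set B : Bif M := ⟨y, hyc, hyf⟩
  set Z : Bif M := ⟨z, hzc, hzf⟩
  have hif : IsIso ((Quotient.functor (bifRel (M := M))).map (X := A) (Y := Z) (ObjectProperty.homMk i)) :=
    (hequiv_iff_quotient_iso (a := A) (b := Z) (ObjectProperty.homMk i)).1 hei
  have hff : IsIso ((Quotient.functor (bifRel (M := M))).map (X := A) (Y := B) (ObjectProperty.homMk f)) :=
    (hequiv_iff_quotient_iso (a := A) (b := B) (ObjectProperty.homMk f)).1 he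
  have hcomp : (Quotient.functor (bifRel (M := M))).map (X := A) (Y := Z) (ObjectProperty.homMk i) ≫
      (Quotient.functor (bifRel (M := M))).map (X := Z) (Y := B) (ObjectProperty.homMk p) =
      (Quotient.functor (bifRel (M := M))).map (X := A) (Y := B) (ObjectProperty.homMk f) := by
    rw [← Functor.map_comp]
    exact congrArg _ (ObjectProperty.hom_ext _ fac)
  have hpiso : IsIso ((Quotient.functor (bifRel (M := M))).map (X := Z) (Y := B)
      (ObjectProperty.homMk p)) := by
    rw [← Category.id_comp ((Quotient.functor (bifRel (M := M))).map (X := Z) (Y := B)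
        (ObjectProperty.homMk p)),
      ← IsIso.inv_hom_id ((Quotient.functor (bifRel (M := M))).map (X := A) (Y := Z)
        (ObjectProperty.homMk i)),
      Category.assoc, hcomp]
    infer_instance
  have hep : HEquiv p := (hequiv_iff_quotient_iso (a := Z) (b := B) (ObjectProperty.homMk p)).2 hpiso
  have hwp : W p := w_of_fib_hequiv hzc hzf hyc hyf hpf hep
  rw [← fac]
  exact w_comp i p hiw hwp

lemma w_of_w_fmap {x y : M} {f : x ⟶ y}
    (h : W (M := M) (X := (bifObj x).obj) (Y := (bifObj y).obj) (Fmap f)) : W f := by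
  have h1 : W (Qmap f ≫ (fibRep (cofRep y).obj).j) := by
    rw [← Rmap_spec]
    exact w_comp _ _ (fibRep (cofRep x).obj).w h
  have h2 : W (Qmap f) := w_cancel_right _ _ (fibRep (cofRep y).obj).w h1
  have h3 : W ((cofRep x).p ≫ f) := by
    rw [← Qmap_spec]
    exact w_comp _ _ h2 (cofRep y).w
  exact w_cancel_left _ _ (cofRep x).w h3

lemma floc_inverts : (W (M := M)).IsInvertedBy (Floc (M := M)) := by
  intro x y f hf
  have h1 : W (Qmap f) := by
    apply w_cancel_right _ _ (cofRep y).w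
    rw [Qmap_spec]
    exact w_comp _ _ (cofRep x).w hf
  have h2 : W (M := M) (X := (bifObj x).obj) (Y := (bifObj y).obj) (Fmap f) := by
    apply w_cancel_left _ _ (fibRep (cofRep x).obj).w
    rw [Fmap]
    show W ((fibRep (cofRep x).obj).j ≫ Rmap (Qmap f))
    rw [Rmap_spec]
    exact w_comp _ _ h1 (fibRep (cofRep y).obj).w
  exact (hequiv_iff_quotient_iso (a := bifObj x) (b := bifObj y) (ObjectProperty.homMk (Fmap f))).1
    (hequiv_of_w (bifObj x).property.1 (bifObj x).property.2
      (bifObj y).property.1 (bifObj y).property.2 h2)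

/-- The key saturation lemma. -/
lemma w_of_Q_iso {x y : M} (f : x ⟶ y) (h : IsIso ((W (M := M)).Q.map f)) :
    W f := by
  have hfac : (W (M := M)).Q ⋙ Localization.Construction.lift (Floc (M := M)) floc_inverts
      = Floc (M := M) := Localization.Construction.fac _ _
  have h2 : IsIso ((Floc (M := M)).map f) := by
    haveI := h
    have e := Functor.congr_hom hfac.symm f
    rw [e, Functor.comp_map]
    infer_instance
  exact w_of_w_fmap (w_of_hequiv (bifObj x).property.1 (bifObj x).property.2
    (bifObj y).property.1 (bifObj y).property.2
    ((hequiv_iff_quotient_iso (a := bifObj x) (b := bifObj y) (ObjectProperty.homMk (Fmap f))).2 h2))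

end MCSat


/-- If a morphism between bifibrant objects of a model category becomes an
isomorphism in the homotopy category `Ho(M) = M[W⁻¹]`, then it is a weak equivalence.
Consequently, the weak equivalences are exactly the maps inverted by the localization functor
`M ⥤ Ho(M)`: a model category is saturated. -/
theorem model_category_saturated
    {M : Type u} [Category.{v} M] [HasFiniteLimits M] [HasFiniteColimits M] [ModelCategory M] :
    (∀ (x y : M) (f : x ⟶ y), Cofibrant x → Fibrant x → Cofibrant y → Fibrant y →
      IsIso ((W (M := M)).Q.map f) → W (M := M) f) ∧
    (∀ (x y : M) (f : x ⟶ y), W (M := M) f ↔ IsIso ((W (M := M)).Q.map f)) := by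
  refine ⟨fun x y f _ _ _ _ h => MCSat.w_of_Q_iso f h,
    fun x y f => ⟨fun hf => (W (M := M)).Q_inverts f hf, fun h => MCSat.w_of_Q_iso f h⟩⟩
end
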